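/- For every partition λ ⊢ n−1 and every 0 ≤ k < n, the map jdt is a bijection from the set {k+T : T ∈ SYT(λ^□), δ(T) = n} of rotated tableaux onto the set {P ∈ SYT(λ^□) : δ(P) = k}. -/

import Mathlib

open scoped Classical

noncomputable section

namespace SchurRot

/-! ### Permutations -/

/-- The value of the permutation `π ∈ S_n` (in one-line notation, with positions and
values `1,…,n`) at position `i ∈ [1,n]`. -/
def permVal {n : ℕ} (π : Equiv.Perm (Fin n)) (i : ℕ) : ℕ :=
  if h : i - 1 < n then ((π ⟨i - 1, h⟩ : Fin n) : ℕ) + 1 else 0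

/-- The descent set `Des(π) = {i ∈ [n-1] : π(i) > π(i+1)}`. -/
def DesPerm {n : ℕ} (π : Equiv.Perm (Fin n)) : Finset ℕ :=
  (Finset.Icc 1 (n - 1)).filter fun i => permVal π (i + 1) < permVal π i

/-- The cyclic descent set of `π ∈ S_n`: `Des(π)`, with `n` added iff `π(n) > π(1)`. -/
def cDesPerm {n : ℕ} (π : Equiv.Perm (Fin n)) : Finset ℕ :=
  if permVal π 1 < permVal π n then insert n (DesPerm π) else DesPerm π

/-- `π ∈ S_n` fixes the letter `n` (so it can be viewed as an element of `S_{n-1}`). -/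
def FixesTop {n : ℕ} (π : Equiv.Perm (Fin n)) : Prop :=
  ∀ i : Fin n, (i : ℕ) = n - 1 → π i = i

/-! ### Quasisymmetric and symmetric functions, in variables `x_1, x_2, …`
indexed by positive natural numbers (the variable `x_0` is unused). -/

/-- The fundamental quasisymmetric function `F_{n,D}`, as a formal power series in the
variables `x_i, i ∈ ℕ` (only variables with positive index are used): the coefficient of
a monomial `m` is the number of weakly increasing sequences `1 ≤ i_1 ≤ … ≤ i_n`, strictly
increasing at positions in `D`, with content monomial `m`. -/
def Fqs (n : ℕ) (D : Finset ℕ) : MvPowerSeries ℕ ℤ :=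
  fun m => (Set.ncard {g : Fin n → ℕ |
    (∀ p, 1 ≤ g p) ∧ Monotone g ∧
    (∀ j ∈ D, ∀ (h1 : j - 1 < n) (h2 : j < n), g ⟨j - 1, h1⟩ < g ⟨j, h2⟩) ∧
    (∑ p, Finsupp.single (g p) (1 : ℕ)) = m} : ℤ)

/-- `Q(B) = Σ_{π ∈ B} F_{m, Des(π)}` for a finite set `B` of permutations. -/
def Qset (m : ℕ) {n : ℕ} (B : Finset (Equiv.Perm (Fin n))) : MvPowerSeries ℕ ℤ :=
  ∑ π ∈ B, Fqs m (DesPerm π)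

/-- `Q(B)` for a multiset `B` of permutations, counted with multiplicity. -/
def Qmult (m : ℕ) {n : ℕ} (B : Multiset (Equiv.Perm (Fin n))) : MvPowerSeries ℕ ℤ :=
  (B.map fun π => Fqs m (DesPerm π)).sum

/-- The set `A·C_n = {π c^k : π ∈ A, 0 ≤ k < n}`, where `c = finRotate n` is the
`n`-cycle `(1,2,…,n)`. -/
def ACn {n : ℕ} (A : Finset (Equiv.Perm (Fin n))) : Finset (Equiv.Perm (Fin n)) :=
  (A ×ˢ Finset.range n).image fun p => p.1 * (finRotate n) ^ p.2

/-- The multiset `A·C_n`, counted with multiplicities. -/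
def ACmult {n : ℕ} (A : Multiset (Equiv.Perm (Fin n))) : Multiset (Equiv.Perm (Fin n)) :=
  A.bind fun π => (Multiset.range n).map fun k => π * (finRotate n) ^ k

/-- A formal power series in the variables `x_i, i ∈ ℕ` is a symmetric function if its
coefficients are invariant under every permutation of the variables. -/
def IsSymmFn (f : MvPowerSeries ℕ ℤ) : Prop :=
  ∀ (σ : Equiv.Perm ℕ) (m : ℕ →₀ ℕ),
    MvPowerSeries.coeff (Finsupp.equivMapDomain σ m) f = MvPowerSeries.coeff m f

/-! ### Tableaux: fillings of an arbitrary finite cell set (in English notation,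
cell `(i,j)` is in row `i` (increasing downwards) and column `j`). -/

/-- A semistandard filling of `cells` (entries ≥ 1, weakly increasing along rows,
strictly increasing down columns, `0` outside `cells`). -/
def IsSSYT (cells : Finset (ℕ × ℕ)) (g : ℕ × ℕ → ℕ) : Prop :=
  (∀ c, c ∉ cells → g c = 0) ∧ (∀ c ∈ cells, 1 ≤ g c) ∧
  (∀ a ∈ cells, ∀ b ∈ cells, a.1 = b.1 → a.2 ≤ b.2 → g a ≤ g b) ∧
  (∀ a ∈ cells, ∀ b ∈ cells, a.2 = b.2 → a.1 < b.1 → g a < g b)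

/-- The content monomial of a filling. -/
def contentOf (cells : Finset (ℕ × ℕ)) (g : ℕ × ℕ → ℕ) : ℕ →₀ ℕ :=
  ∑ c ∈ cells, Finsupp.single (g c) 1

/-- The (skew) Schur function of an arbitrary finite cell set: the sum, over all
semistandard fillings, of their content monomials. -/
def schurOf (cells : Finset (ℕ × ℕ)) : MvPowerSeries ℕ ℤ :=
  fun m => (Set.ncard {g : ℕ × ℕ → ℕ | IsSSYT cells g ∧ contentOf cells g = m} : ℤ)

/-- `f` is Schur-positive of degree `m`: a nonnegative integer combination of Schur
functions of partitions of `m` (encoded by a multiset of Young diagrams). -/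
def SchurPositive (m : ℕ) (f : MvPowerSeries ℕ ℤ) : Prop :=
  ∃ M : Multiset YoungDiagram, (∀ μ ∈ M, μ.cells.card = m) ∧
    f = (M.map fun μ => schurOf μ.cells).sum

/-! ### Standard fillings, rotation, reading words -/

/-- A filling of `cells` by the letters `1,…,n`, each used exactly once (and `0`
outside `cells`). -/
def IsFillingF (n : ℕ) (cells : Finset (ℕ × ℕ)) (f : ℕ × ℕ → ℕ) : Prop :=
  Set.BijOn f ↑cells (Set.Icc 1 n) ∧ ∀ c, c ∉ cells → f c = 0

/-- A filling is standard if its rows and columns increase. -/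
def IsStandardF (cells : Finset (ℕ × ℕ)) (f : ℕ × ℕ → ℕ) : Prop :=
  (∀ a ∈ cells, ∀ b ∈ cells, a.1 = b.1 → a.2 < b.2 → f a < f b) ∧
  (∀ a ∈ cells, ∀ b ∈ cells, a.2 = b.2 → a.1 < b.1 → f a < f b)

/-- Addition of `k` modulo `n` on the letters `1,…,n` (with `0` identified with `n`). -/
def rotval (n k e : ℕ) : ℕ := (e + k - 1) % n + 1

/-- Addition of an integer `k` modulo `n` on the letters `1,…,n`. -/
def rotvalZ (n : ℕ) (k : ℤ) (e : ℕ) : ℕ := (((e : ℤ) + k - 1) % (n : ℤ)).toNat + 1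

/-- Apply `φ` to every entry of a filling (keeping `0` outside `cells`);
e.g. `mapEntries cells (rotval n k) T` is the rotated tableau `k + T`. -/
def mapEntries (cells : Finset (ℕ × ℕ)) (φ : ℕ → ℕ) (f : ℕ × ℕ → ℕ) : ℕ × ℕ → ℕ :=
  fun c => if c ∈ cells then φ (f c) else 0

/-- The row containing the entry `e`. -/
def rowOf (cells : Finset (ℕ × ℕ)) (f : ℕ × ℕ → ℕ) (e : ℕ) : ℕ :=
  sInf {i | ∃ j, (i, j) ∈ cells ∧ f (i, j) = e}

/-- The cell containing the entry `e`. -/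
def cellOf (cells : Finset (ℕ × ℕ)) (f : ℕ × ℕ → ℕ) (e : ℕ) : ℕ × ℕ :=
  (rowOf cells f e,
    sInf {j | (rowOf cells f e, j) ∈ cells ∧ f (rowOf cells f e, j) = e})

/-- The cyclic descent set of a (rotated) filling of size `n`:
`{i ∈ [n] : i+1 (mod n) lies in a strictly lower row than i}`. -/
def cDesRot (n : ℕ) (cells : Finset (ℕ × ℕ)) (f : ℕ × ℕ → ℕ) : Finset ℕ :=
  (Finset.Icc 1 n).filter fun i => rowOf cells f i < rowOf cells f (rotval n 1 i)

/-- The descent set of a filling of size `n`: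
`{i ∈ [n-1] : i+1 lies in a strictly lower row than i}`. -/
def DesTab (n : ℕ) (cells : Finset (ℕ × ℕ)) (f : ℕ × ℕ → ℕ) : Finset ℕ :=
  (Finset.Icc 1 (n - 1)).filter fun i => rowOf cells f i < rowOf cells f (i + 1)

/-- `a` comes before `b` in reading order (rows left to right, bottom row first). -/
def readBefore (a b : ℕ × ℕ) : Prop :=
  b.1 < a.1 ∨ (a.1 = b.1 ∧ a.2 < b.2)

/-- The (1-indexed) position of the cell `c` in the reading order of `cells`. -/
def posInRead (cells : Finset (ℕ × ℕ)) (c : ℕ × ℕ) : ℕ :=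
  (cells.filter fun c' => readBefore c' c).card + 1

/-- The value at `e` of the inverse of the reading word of the filling `f`, i.e. the
position of the entry `e` in the reading word. -/
def invReadVal (cells : Finset (ℕ × ℕ)) (f : ℕ × ℕ → ℕ) (e : ℕ) : ℕ :=
  posInRead cells (cellOf cells f e)

/-- `A_λ` (for `cells` the diagram of `λ ⊢ m`): the set of permutations in `S_m` that are
inverse reading words of standard Young tableaux of shape `λ`. -/
def invWordSet (m : ℕ) (cells : Finset (ℕ × ℕ)) : Finset (Equiv.Perm (Fin m)) :=
  Finset.univ.filter fun π => ∃ f : ℕ × ℕ → ℕ,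
    IsFillingF m cells f ∧ IsStandardF cells f ∧
    ∀ e ∈ Finset.Icc 1 m, permVal π e = invReadVal cells f e

/-! ### The jeu-de-taquin type straightening algorithms -/

/-- The entry `i` is short: some entry immediately above it or immediately to its left
is larger. -/
def IsShort (cells : Finset (ℕ × ℕ)) (f : ℕ × ℕ → ℕ) (i : ℕ) : Prop :=
  ∃ c ∈ cells, f c = i ∧
    ((1 ≤ c.1 ∧ (c.1 - 1, c.2) ∈ cells ∧ i < f (c.1 - 1, c.2)) ∨
     (1 ≤ c.2 ∧ (c.1, c.2 - 1) ∈ cells ∧ i < f (c.1, c.2 - 1)))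

/-- The entry `i` is tall: some entry immediately below it or immediately to its right
is smaller. -/
def IsTall (cells : Finset (ℕ × ℕ)) (f : ℕ × ℕ → ℕ) (i : ℕ) : Prop :=
  ∃ c ∈ cells, f c = i ∧
    (((c.1 + 1, c.2) ∈ cells ∧ f (c.1 + 1, c.2) < i) ∨
     ((c.1, c.2 + 1) ∈ cells ∧ f (c.1, c.2 + 1) < i))

def shorts (n : ℕ) (cells : Finset (ℕ × ℕ)) (f : ℕ × ℕ → ℕ) : Finset ℕ :=
  (Finset.Icc 1 n).filter fun i => IsShort cells f i

def talls (n : ℕ) (cells : Finset (ℕ × ℕ)) (f : ℕ × ℕ → ℕ) : Finset ℕ :=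
  (Finset.Icc 1 n).filter fun i => IsTall cells f i

/-- One elementary step of `jdt`: take the minimal short entry `i` and switch it with
the larger of the entries immediately above it and immediately to its left. -/
def stepFun (n : ℕ) (cells : Finset (ℕ × ℕ)) (f : ℕ × ℕ → ℕ) : ℕ × ℕ → ℕ :=
  if h : (shorts n cells f).Nonempty then
    let i := (shorts n cells f).min' h
    let c := cellOf cells f i
    let av := if 1 ≤ c.1 ∧ (c.1 - 1, c.2) ∈ cells then f (c.1 - 1, c.2) else 0
    let lv := if 1 ≤ c.2 ∧ (c.1, c.2 - 1) ∈ cells then f (c.1, c.2 - 1) else 0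
    mapEntries cells (Equiv.swap i (max av lv)) f
  else f

/-- One elementary step of `ijdt`: take the maximal tall entry `i` and switch it with
the smaller of the entries immediately below it and immediately to its right. -/
def istepFun (n : ℕ) (cells : Finset (ℕ × ℕ)) (f : ℕ × ℕ → ℕ) : ℕ × ℕ → ℕ :=
  if h : (talls n cells f).Nonempty then
    let i := (talls n cells f).max' h
    let c := cellOf cells f i
    let bv := if (c.1 + 1, c.2) ∈ cells then f (c.1 + 1, c.2) else n + 1
    let rv := if (c.1, c.2 + 1) ∈ cells then f (c.1, c.2 + 1) else n + 1
    mapEntries cells (Equiv.swap i (min bv rv)) f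
  else f

/-- The straightening `jdt`: repeat the elementary step until the filling is standard. -/
def jdtFun (n : ℕ) (cells : Finset (ℕ × ℕ)) (f : ℕ × ℕ → ℕ) : ℕ × ℕ → ℕ :=
  if h : ∃ m, IsStandardF cells ((stepFun n cells)^[m] f) then
    (stepFun n cells)^[Nat.find h] f
  else f

/-- The straightening `ijdt`: repeat the reverse elementary step until the filling is
standard. -/
def ijdtFun (n : ℕ) (cells : Finset (ℕ × ℕ)) (f : ℕ × ℕ → ℕ) : ℕ × ℕ → ℕ :=
  if h : ∃ m, IsStandardF cells ((istepFun n cells)^[m] f) then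
    (istepFun n cells)^[Nat.find h] f
  else f

/-! ### The shape `λ^□` -/

/-- The cell of the disconnected box of `λ^□`, strictly north and strictly east of `λ`. -/
def boxCell (lam : YoungDiagram) : ℕ × ℕ := (0, lam.rowLen 0)

/-- The skew shape `λ^□`: `λ` (shifted one row down) together with one disconnected box
at its upper right corner. -/
def boxShape (lam : YoungDiagram) : Finset (ℕ × ℕ) :=
  insert (boxCell lam) (lam.cells.image fun c => (c.1 + 1, c.2))

/-- `δ(P)`: the entry of the disconnected box of a filling of `λ^□`. -/
def deltaOf (lam : YoungDiagram) (f : ℕ × ℕ → ℕ) : ℕ := f (boxCell lam)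

/-- The inverse of `jdt` on `SYT(λ^□)`: `jdt⁻¹(P) = δ(P) + ijdt(-δ(P) + P)`. -/
def jdtInvFun (n : ℕ) (lam : YoungDiagram) (P : ℕ × ℕ → ℕ) : ℕ × ℕ → ℕ :=
  mapEntries (boxShape lam) (rotval n (deltaOf lam P))
    (ijdtFun n (boxShape lam)
      (mapEntries (boxShape lam) (rotval n (n - deltaOf lam P)) P))

/-- The cyclic descent set of `P ∈ SYT(λ^□)`: `cDes(P) = cDes_rot(jdt⁻¹(P))`. -/
def cDesBox (n : ℕ) (lam : YoungDiagram) (P : ℕ × ℕ → ℕ) : Finset ℕ :=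
  cDesRot n (boxShape lam) (jdtInvFun n lam P)

/-- The restriction of `f` to the entries in `S` is standard: there are no two entries
in `S` in which the smaller one lies weakly south and weakly east of the larger one. -/
def RestrictedStd (cells : Finset (ℕ × ℕ)) (f : ℕ × ℕ → ℕ) (S : Finset ℕ) : Prop :=
  ∀ a ∈ cells, ∀ b ∈ cells, f a ∈ S → f b ∈ S →
    a.1 ≤ b.1 → a.2 ≤ b.2 → a ≠ b → f a < f b

end SchurRot


noncomputable section
namespace SchurRot


section Geom
variable {lam : YoungDiagram}

lemma mem_boxShape {c : ℕ × ℕ} :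
    c ∈ boxShape lam ↔ c = boxCell lam ∨ (1 ≤ c.1 ∧ (c.1 - 1, c.2) ∈ lam) := by
  unfold boxShape
  simp only [Finset.mem_insert, Finset.mem_image, YoungDiagram.mem_cells]
  constructor
  · rintro (h | ⟨a, ha, rfl⟩)
    · exact Or.inl h
    · exact Or.inr ⟨Nat.le_add_left 1 a.1, by simpa using ha⟩
  · rintro (h | ⟨h1, h2⟩)
    · exact Or.inl h
    · refine Or.inr ⟨(c.1 - 1, c.2), h2, ?_⟩
      have : c.1 - 1 + 1 = c.1 := by omega
      simp [this]

lemma boxCell_mem : boxCell lam ∈ boxShape lam := Finset.mem_insert_self _ _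

lemma part_of_pos {c : ℕ × ℕ} (hc : c ∈ boxShape lam) (h : 1 ≤ c.1) :
    (c.1 - 1, c.2) ∈ lam := by
  rcases mem_boxShape.mp hc with h' | h'
  · rw [h'] at h ⊢; exact absurd h (by simp [boxCell])
  · exact h'.2

lemma part_col_lt {c : ℕ × ℕ} (hc : c ∈ boxShape lam) (h : 1 ≤ c.1) :
    c.2 < lam.rowLen 0 := by
  have := part_of_pos hc h
  rw [YoungDiagram.mem_iff_lt_rowLen] at this
  exact lt_of_lt_of_le this (lam.rowLen_anti 0 (c.1 - 1) (Nat.zero_le _))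

lemma box_of_row0 {c : ℕ × ℕ} (hc : c ∈ boxShape lam) (h : c.1 = 0) :
    c = boxCell lam := by
  rcases mem_boxShape.mp hc with h' | h'
  · exact h'
  · omega

lemma ne_box_pos {c : ℕ × ℕ} (hc : c ∈ boxShape lam) (h : c ≠ boxCell lam) : 1 ≤ c.1 := by
  by_contra h'
  exact h (box_of_row0 hc (by omega))

lemma row_contig {r j j' : ℕ} (h : (r, j) ∈ boxShape lam) (hr : 1 ≤ r) (hj : j' ≤ j) :
    (r, j') ∈ boxShape lam := by
  refine mem_boxShape.mpr (Or.inr ⟨hr, ?_⟩)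
  exact lam.up_left_mem le_rfl hj (part_of_pos h hr)

lemma col_contig {r r' j : ℕ} (h : (r, j) ∈ boxShape lam) (hr : 1 ≤ r') (hrr : r' ≤ r) :
    (r', j) ∈ boxShape lam := by
  refine mem_boxShape.mpr (Or.inr ⟨hr, ?_⟩)
  have hp : (r - 1, j) ∈ lam := part_of_pos h (by omega)
  exact lam.up_left_mem (by omega) le_rfl hp

lemma corner_mem {a b : ℕ × ℕ} (ha : a ∈ boxShape lam) (hb : b ∈ boxShape lam)
    (ha1 : 1 ≤ a.1) (hb1 : 1 ≤ b.1) (h : a.1 ≤ b.1) : (a.1, b.2) ∈ boxShape lam := by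
  refine mem_boxShape.mpr (Or.inr ⟨ha1, ?_⟩)
  have hp : (b.1 - 1, b.2) ∈ lam := part_of_pos hb hb1
  exact lam.up_left_mem (by omega) le_rfl hp

/-- no adjacency involves the box; `d` is the NW neighbor of `c`. -/
lemma no_box_adj {c d : ℕ × ℕ} (hc : c ∈ boxShape lam) (hd : d ∈ boxShape lam)
    (hadj : (c.1 = d.1 + 1 ∧ c.2 = d.2) ∨ (c.1 = d.1 ∧ c.2 = d.2 + 1)) :
    1 ≤ c.1 ∧ 1 ≤ d.1 := by
  rcases hadj with ⟨h1, h2⟩ | ⟨h1, h2⟩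
  · have hc1 : 1 ≤ c.1 := by omega
    refine ⟨hc1, ?_⟩
    by_contra h
    have hdb := box_of_row0 hd (by omega)
    have hd2 : d.2 = lam.rowLen 0 := by rw [hdb]; rfl
    have := part_col_lt hc hc1
    omega
  · have hc1 : 1 ≤ c.1 := by
      by_contra h
      have hcb := box_of_row0 hc (by omega)
      have hdb := box_of_row0 hd (by omega)
      have hc2 : c.2 = lam.rowLen 0 := by rw [hcb]; rfl
      have hd2 : d.2 = lam.rowLen 0 := by rw [hdb]; rfl
      omega
    exact ⟨hc1, by omega⟩

end Geom

section Fill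
variable {n : ℕ} {lam : YoungDiagram} {f : ℕ × ℕ → ℕ}

lemma fill_ge (hf : IsFillingF n (boxShape lam) f) {c : ℕ × ℕ} (hc : c ∈ boxShape lam) :
    1 ≤ f c := (hf.1.mapsTo hc).1

lemma fill_le (hf : IsFillingF n (boxShape lam) f) {c : ℕ × ℕ} (hc : c ∈ boxShape lam) :
    f c ≤ n := (hf.1.mapsTo hc).2

lemma fill_inj (hf : IsFillingF n (boxShape lam) f) {a b : ℕ × ℕ}
    (ha : a ∈ boxShape lam) (hb : b ∈ boxShape lam) (h : f a = f b) : a = b :=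
  hf.1.injOn ha hb h

lemma fill_surj (hf : IsFillingF n (boxShape lam) f) {e : ℕ} (h1 : 1 ≤ e) (h2 : e ≤ n) :
    ∃ c ∈ boxShape lam, f c = e := by
  obtain ⟨c, hc, hfc⟩ := hf.1.surjOn (⟨h1, h2⟩ : e ∈ Set.Icc 1 n)
  exact ⟨c, hc, hfc⟩

end Fill
section Maps
variable {n k : ℕ} {lam : YoungDiagram} {f : ℕ × ℕ → ℕ} {φ ψ : ℕ → ℕ}

lemma cellOf_eq (hf : IsFillingF n (boxShape lam) f) {c₀ : ℕ × ℕ}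
    (hc₀ : c₀ ∈ boxShape lam) : cellOf (boxShape lam) f (f c₀) = c₀ := by
  have hrow : {i | ∃ j, (i, j) ∈ boxShape lam ∧ f (i, j) = f c₀} = {c₀.1} := by
    ext i
    simp only [Set.mem_setOf_eq, Set.mem_singleton_iff]
    constructor
    · rintro ⟨j, hj, hfj⟩
      have := fill_inj hf hj hc₀ hfj
      rw [← this]
    · rintro rfl
      exact ⟨c₀.2, hc₀, rfl⟩
  have hrowOf : rowOf (boxShape lam) f (f c₀) = c₀.1 := by
    unfold rowOf; rw [hrow]; exact csInf_singleton _
  have hcol : {j | (c₀.1, j) ∈ boxShape lam ∧ f (c₀.1, j) = f c₀} = {c₀.2} := by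
    ext j
    simp only [Set.mem_setOf_eq, Set.mem_singleton_iff]
    constructor
    · rintro ⟨hj, hfj⟩
      have := fill_inj hf hj hc₀ hfj
      exact congrArg Prod.snd this
    · rintro rfl
      exact ⟨hc₀, rfl⟩
  unfold cellOf
  rw [hrowOf, hcol, csInf_singleton]

lemma mapEntries_apply {c : ℕ × ℕ} (hc : c ∈ boxShape lam) :
    mapEntries (boxShape lam) φ f c = φ (f c) := if_pos hc

lemma mapEntries_apply_not {c : ℕ × ℕ} (hc : c ∉ boxShape lam) :
    mapEntries (boxShape lam) φ f c = 0 := if_neg hc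

lemma fill_mapEntries (hφ : Set.BijOn φ (Set.Icc 1 n) (Set.Icc 1 n))
    (hf : IsFillingF n (boxShape lam) f) :
    IsFillingF n (boxShape lam) (mapEntries (boxShape lam) φ f) := by
  constructor
  · refine (hφ.comp hf.1).congr fun c hc => ?_
    exact (mapEntries_apply hc).symm
  · intro c hc; exact mapEntries_apply_not hc

lemma swap_mapsTo {i v : ℕ} (hi1 : 1 ≤ i) (hi2 : i ≤ n) (hv1 : 1 ≤ v) (hv2 : v ≤ n) :
    Set.MapsTo (Equiv.swap i v) (Set.Icc 1 n) (Set.Icc 1 n) := by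
  intro x hx
  rw [Equiv.swap_apply_def]
  split_ifs <;> first | exact ⟨hv1, hv2⟩ | exact ⟨hi1, hi2⟩ | exact hx

lemma swap_bijOn {i v : ℕ} (hi1 : 1 ≤ i) (hi2 : i ≤ n) (hv1 : 1 ≤ v) (hv2 : v ≤ n) :
    Set.BijOn (Equiv.swap i v : Equiv.Perm ℕ) (Set.Icc 1 n) (Set.Icc 1 n) := by
  refine ⟨swap_mapsTo hi1 hi2 hv1 hv2, (Equiv.injective _).injOn, ?_⟩
  intro y hy
  refine ⟨Equiv.swap i v y, swap_mapsTo hi1 hi2 hv1 hv2 hy, Equiv.swap_apply_self i v y⟩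

lemma rotval_low {e : ℕ} (h1 : 1 ≤ e) (h2 : e + k ≤ n) : rotval n k e = e + k := by
  unfold rotval
  rw [Nat.mod_eq_of_lt (by omega)]
  omega

lemma rotval_high {e : ℕ} (hk : k ≤ n) (h1 : n < e + k) (h2 : e ≤ n) (he : 1 ≤ e) :
    rotval n k e = e + k - n := by
  unfold rotval
  rw [Nat.mod_eq_sub_mod (by omega), Nat.mod_eq_of_lt (by omega)]
  omega

lemma rotval_ge {e : ℕ} : 1 ≤ rotval n k e := by unfold rotval; omega

lemma rotval_le {e : ℕ} (hn : 1 ≤ n) : rotval n k e ≤ n := by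
  unfold rotval
  have := Nat.mod_lt (e + k - 1) (show 0 < n by omega)
  omega

lemma rotval_injOn {e e' : ℕ} (h : rotval n k e = rotval n k e')
    (h1 : 1 ≤ e) (h2 : e ≤ n) (h1' : 1 ≤ e') (h2' : e' ≤ n) : e = e' := by
  unfold rotval at h
  have a1 : e + k - 1 = e - 1 + k := by omega
  have a2 : e' + k - 1 = e' - 1 + k := by omega
  rw [a1, a2] at h
  have h' : (e - 1 + k) % n = (e' - 1 + k) % n := by omega
  have := Nat.ModEq.add_right_cancel' k h'
  unfold Nat.ModEq at this
  rw [Nat.mod_eq_of_lt (by omega), Nat.mod_eq_of_lt (by omega)] at this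
  omega

lemma rotval_comp {e : ℕ} (hk : k ≤ n) (h1 : 1 ≤ e) (h2 : e ≤ n) :
    rotval n k (rotval n (n - k) e) = e := by
  unfold rotval
  have e1 : (e + (n - k) - 1) % n + 1 + k - 1 = (e + (n - k) - 1) % n + k := by omega
  rw [e1, Nat.mod_add_mod]
  have e2 : e + (n - k) - 1 + k = e - 1 + n := by omega
  rw [e2, Nat.add_mod_right, Nat.mod_eq_of_lt (by omega)]
  omega

lemma rotval_bijOn (hn : 1 ≤ n) (hk : k ≤ n) :
    Set.BijOn (rotval n k) (Set.Icc 1 n) (Set.Icc 1 n) := by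
  refine ⟨fun x hx => ⟨rotval_ge, rotval_le hn⟩, ?_, ?_⟩
  · intro x hx y hy h
    exact rotval_injOn h hx.1 hx.2 hy.1 hy.2
  · intro y hy
    exact ⟨rotval n (n - k) y, ⟨rotval_ge, rotval_le hn⟩, rotval_comp hk hy.1 hy.2⟩

lemma mapEntries_comp (g : ℕ × ℕ → ℕ) :
    mapEntries (boxShape lam) φ (mapEntries (boxShape lam) ψ g) =
      mapEntries (boxShape lam) (fun e => φ (ψ e)) g := by
  funext c
  by_cases hc : c ∈ boxShape lam <;> simp [mapEntries, hc]

lemma mapEntries_eq_self (g : ℕ × ℕ → ℕ) (h : ∀ c ∈ boxShape lam, φ (g c) = g c)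
    (h0 : ∀ c ∉ boxShape lam, g c = 0) : mapEntries (boxShape lam) φ g = g := by
  funext c
  by_cases hc : c ∈ boxShape lam
  · rw [mapEntries_apply hc]; exact h c hc
  · rw [mapEntries_apply_not hc]; exact (h0 c hc).symm

lemma mapEntries_cancel (hf : IsFillingF n (boxShape lam) f)
    (h : ∀ e, 1 ≤ e → e ≤ n → ψ (φ e) = e) :
    mapEntries (boxShape lam) ψ (mapEntries (boxShape lam) φ f) = f := by
  rw [mapEntries_comp]
  exact mapEntries_eq_self f
    (fun c hc => h (f c) (fill_ge hf hc) (fill_le hf hc)) hf.2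

lemma std_NW (hf : IsFillingF n (boxShape lam) f)
    (hst : IsStandardF (boxShape lam) f) {a b : ℕ × ℕ}
    (ha : a ∈ boxShape lam) (hb : b ∈ boxShape lam)
    (h1 : a.1 ≤ b.1) (h2 : a.2 ≤ b.2) (hne : a ≠ b) : f a < f b := by
  rcases eq_or_lt_of_le h1 with he1 | hl1
  · refine hst.1 a ha b hb he1 ?_
    rcases eq_or_lt_of_le h2 with he2 | hl2
    · exact absurd (Prod.ext he1 he2) hne
    · exact hl2
  · rcases eq_or_lt_of_le h2 with he2 | hl2
    · exact hst.2 a ha b hb he2 hl1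
    · -- both strict: neither is the box
      have hb1 : 1 ≤ b.1 := by omega
      have ha1 : 1 ≤ a.1 := by
        by_contra h
        have hab := box_of_row0 ha (by omega)
        have ha2 : a.2 = lam.rowLen 0 := by rw [hab]; rfl
        have := part_col_lt hb hb1
        omega
      have hx : (a.1, b.2) ∈ boxShape lam := corner_mem ha hb ha1 hb1 h1
      have s1 : f a < f (a.1, b.2) := hst.1 a ha _ hx rfl hl2
      have s2 : f (a.1, b.2) < f b := hst.2 _ hx b hb rfl hl1
      omega

end Maps
section Core
variable {n k : ℕ} {lam : YoungDiagram} {f : ℕ × ℕ → ℕ}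

/-- The invariant class of fillings preserved by the `jdt` steps. -/
structure Inv (n k : ℕ) (lam : YoungDiagram) (f : ℕ × ℕ → ℕ) : Prop where
  fill : IsFillingF n (boxShape lam) f
  small : RestrictedStd (boxShape lam) f (Finset.Icc 1 k)
  large : RestrictedStd (boxShape lam) f (Finset.Icc (k + 1) n)
  boxv : f (boxCell lam) = k
  jinv : ∀ b ∈ boxShape lam, ∀ d ∈ boxShape lam,
      ((d.1 = b.1 + 1 ∧ d.2 = b.2) ∨ (d.1 = b.1 ∧ d.2 = b.2 + 1)) →
      f b ≤ k → k < f d → ∀ s ∈ shorts n (boxShape lam) f, f b ≤ s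

lemma mem_shorts {i : ℕ} : i ∈ shorts n (boxShape lam) f ↔
    (1 ≤ i ∧ i ≤ n) ∧ IsShort (boxShape lam) f i := by
  unfold shorts
  rw [Finset.mem_filter, Finset.mem_Icc]

lemma box_not_short (hf : IsFillingF n (boxShape lam) f) :
    ¬ IsShort (boxShape lam) f (f (boxCell lam)) := by
  rintro ⟨c, hc, hfc, hdisj⟩
  have hcb : c = boxCell lam := fill_inj hf hc boxCell_mem hfc
  subst hcb
  rcases hdisj with ⟨h1, h2, h3⟩ | ⟨h1, h2, h3⟩
  · exact absurd h1 (by simp [boxCell])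
  · have hb := box_of_row0 h2 (by rfl)
    have h4 : (boxCell lam).2 - 1 = (boxCell lam).2 := congrArg Prod.snd hb
    omega

lemma step_empty (hne : ¬ (shorts n (boxShape lam) f).Nonempty) :
    stepFun n (boxShape lam) f = f := by
  unfold stepFun
  rw [dif_neg hne]

def StepData (n k : ℕ) (lam : YoungDiagram) (f : ℕ × ℕ → ℕ) : Prop :=
  ∃ (i v : ℕ) (c c' : ℕ × ℕ),
    c ∈ boxShape lam ∧ c' ∈ boxShape lam ∧
    ((c.1 = c'.1 + 1 ∧ c.2 = c'.2) ∨ (c.1 = c'.1 ∧ c.2 = c'.2 + 1)) ∧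
    f c = i ∧ f c' = v ∧ i < k ∧ k < v ∧ v ≤ n ∧ 1 ≤ i ∧
    i ∈ shorts n (boxShape lam) f ∧
    (∀ s ∈ shorts n (boxShape lam) f, i ≤ s) ∧
    stepFun n (boxShape lam) f = mapEntries (boxShape lam) (Equiv.swap i v) f ∧
    (∀ d ∈ boxShape lam,
      ((c.1 = d.1 + 1 ∧ c.2 = d.2) ∨ (c.1 = d.1 ∧ c.2 = d.2 + 1)) → f d ≤ v)

lemma step_spec (hk1 : 1 ≤ k) (hf : Inv n k lam f)
    (hne : (shorts n (boxShape lam) f).Nonempty) : StepData n k lam f := by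
  have hiS := (shorts n (boxShape lam) f).min'_mem hne
  set i := (shorts n (boxShape lam) f).min' hne with hidef
  obtain ⟨hiIcc, hish⟩ := mem_shorts.mp hiS
  obtain ⟨c, hc, hfc, hdisj⟩ := hish
  have himin : ∀ s ∈ shorts n (boxShape lam) f, i ≤ s :=
    fun s hs => Finset.min'_le _ s hs
  have hcb : c ≠ boxCell lam := by
    intro h
    apply box_not_short hf.fill
    rw [← h, hfc]
    exact ⟨c, hc, hfc, hdisj⟩
  have hc1 : 1 ≤ c.1 := ne_box_pos hc hcb
  have hcell : cellOf (boxShape lam) f i = c := by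
    rw [← hfc]; exact cellOf_eq hf.fill hc
  set av := (if 1 ≤ c.1 ∧ (c.1 - 1, c.2) ∈ boxShape lam
      then f (c.1 - 1, c.2) else 0) with havdef
  set lv := (if 1 ≤ c.2 ∧ (c.1, c.2 - 1) ∈ boxShape lam
      then f (c.1, c.2 - 1) else 0) with hlvdef
  have hvi : i < max av lv := by
    rcases hdisj with ⟨h1, h2, h3⟩ | ⟨h1, h2, h3⟩
    · have hav : av = f (c.1 - 1, c.2) := if_pos ⟨h1, h2⟩
      have := le_max_left av lv
      omega
    · have hlv : lv = f (c.1, c.2 - 1) := if_pos ⟨h1, h2⟩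
      have := le_max_right av lv
      omega
  have hex : ∃ c', c' ∈ boxShape lam ∧ f c' = max av lv ∧
      ((c.1 = c'.1 + 1 ∧ c.2 = c'.2) ∨ (c.1 = c'.1 ∧ c.2 = c'.2 + 1)) := by
    rcases le_total lv av with h | h
    · have hmax : max av lv = av := max_eq_left h
      by_cases hcond : 1 ≤ c.1 ∧ (c.1 - 1, c.2) ∈ boxShape lam
      · refine ⟨(c.1 - 1, c.2), hcond.2, ?_, Or.inl ⟨by omega, rfl⟩⟩
        rw [hmax, havdef, if_pos hcond]
      · exfalso
        have : av = 0 := by rw [havdef, if_neg hcond]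
        omega
    · have hmax : max av lv = lv := max_eq_right h
      by_cases hcond : 1 ≤ c.2 ∧ (c.1, c.2 - 1) ∈ boxShape lam
      · refine ⟨(c.1, c.2 - 1), hcond.2, ?_, Or.inr ⟨rfl, by omega⟩⟩
        rw [hmax, hlvdef, if_pos hcond]
      · exfalso
        have : lv = 0 := by rw [hlvdef, if_neg hcond]
        omega
  obtain ⟨c', hc', hfc', adj⟩ := hex
  set v := max av lv with hvdef
  have hvn : v ≤ n := by rw [← hfc']; exact fill_le hf.fill hc'
  have hcc' : c' ≠ c := by
    intro h
    rw [h, hfc] at hfc'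
    omega
  have hle1 : c'.1 ≤ c.1 := by rcases adj with ⟨h1, h2⟩ | ⟨h1, h2⟩ <;> omega
  have hle2 : c'.2 ≤ c.2 := by rcases adj with ⟨h1, h2⟩ | ⟨h1, h2⟩ <;> omega
  have hvk : k < v := by
    by_contra hcon
    push_neg at hcon
    have := hf.small c' hc' c hc (Finset.mem_Icc.mpr ⟨by omega, by omega⟩)
      (Finset.mem_Icc.mpr ⟨by omega, by omega⟩) hle1 hle2 hcc'
    omega
  have hik' : i ≤ k := by
    by_contra hcon
    push_neg at hcon
    have := hf.large c' hc' c hc (Finset.mem_Icc.mpr ⟨by omega, by omega⟩)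
      (Finset.mem_Icc.mpr ⟨by omega, by omega⟩) hle1 hle2 hcc'
    omega
  have hik : i < k := by
    rcases eq_or_lt_of_le hik' with h | h
    · exfalso
      apply hcb
      refine fill_inj hf.fill hc boxCell_mem ?_
      rw [hfc, hf.boxv, h]
    · exact h
  have hstep0 : stepFun n (boxShape lam) f =
      mapEntries (boxShape lam) (Equiv.swap i (max
        (if 1 ≤ (cellOf (boxShape lam) f i).1 ∧
            ((cellOf (boxShape lam) f i).1 - 1, (cellOf (boxShape lam) f i).2) ∈ boxShape lam
          then f ((cellOf (boxShape lam) f i).1 - 1, (cellOf (boxShape lam) f i).2) else 0)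
        (if 1 ≤ (cellOf (boxShape lam) f i).2 ∧
            ((cellOf (boxShape lam) f i).1, (cellOf (boxShape lam) f i).2 - 1) ∈ boxShape lam
          then f ((cellOf (boxShape lam) f i).1, (cellOf (boxShape lam) f i).2 - 1) else 0))) f := by
    unfold stepFun
    rw [dif_pos hne]
  rw [hcell] at hstep0
  have hother : ∀ d ∈ boxShape lam,
      ((c.1 = d.1 + 1 ∧ c.2 = d.2) ∨ (c.1 = d.1 ∧ c.2 = d.2 + 1)) → f d ≤ v := by
    intro d hd hadj
    rcases hadj with ⟨h1, h2⟩ | ⟨h1, h2⟩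
    · have hdcell : d = (c.1 - 1, c.2) := Prod.ext (by omega) (by omega)
      have hav : av = f (c.1 - 1, c.2) := if_pos ⟨by omega, by rw [← hdcell]; exact hd⟩
      have := le_max_left av lv
      rw [hdcell, ← hav]
      omega
    · have hdcell : d = (c.1, c.2 - 1) := Prod.ext (by omega) (by omega)
      have hlv : lv = f (c.1, c.2 - 1) := if_pos ⟨by omega, by rw [← hdcell]; exact hd⟩
      have := le_max_right av lv
      rw [hdcell, ← hlv]
      omega
  exact ⟨i, v, c, c', hc, hc', adj, hfc, hfc', hik, hvk, hvn, by omega, hiS, himin,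
    hstep0, hother⟩

end Core
section Walk
variable {n k : ℕ} {lam : YoungDiagram} {f : ℕ × ℕ → ℕ}

lemma walk_row (hf : IsFillingF n (boxShape lam) f) {i : ℕ}
    (hmin : ∀ s ∈ shorts n (boxShape lam) f, i ≤ s) {r : ℕ} (hr : 1 ≤ r) :
    ∀ d j, (r, j + d) ∈ boxShape lam → f (r, j + d) < i →
      (r, j) ∈ boxShape lam ∧ f (r, j) < i := by
  intro d
  induction d with
  | zero => exact fun j h1 h2 => ⟨h1, h2⟩
  | succ d ih =>
    intro j hcell hval
    have hin : f (r, j + (d + 1)) ≤ n := fill_le hf hcell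
    have hi1 : 1 ≤ f (r, j + (d + 1)) := fill_ge hf hcell
    have hprev : (r, j + d) ∈ boxShape lam := row_contig hcell hr (by omega)
    have hnei : f (r, j + d) ≠ f (r, j + (d + 1)) := by
      intro h
      have := fill_inj hf hprev hcell h
      simp only [Prod.mk.injEq] at this
      omega
    have hlt : f (r, j + d) < f (r, j + (d + 1)) := by
      by_contra hcon
      push_neg at hcon
      have hshort : f (r, j + (d + 1)) ∈ shorts n (boxShape lam) f := by
        rw [mem_shorts]
        refine ⟨⟨hi1, hin⟩, (r, j + (d + 1)), hcell, rfl, Or.inr ⟨by omega, ?_, ?_⟩⟩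
        · show (r, j + (d + 1) - 1) ∈ boxShape lam
          have he : j + (d + 1) - 1 = j + d := by omega
          rw [he]; exact hprev
        · show f (r, j + (d + 1)) < f (r, j + (d + 1) - 1)
          have he : j + (d + 1) - 1 = j + d := by omega
          rw [he]; omega
      have := hmin _ hshort
      omega
    exact ih j hprev (by omega)

lemma walk_col (hf : IsFillingF n (boxShape lam) f) {i : ℕ}
    (hmin : ∀ s ∈ shorts n (boxShape lam) f, i ≤ s) {col : ℕ} :
    ∀ d j, 1 ≤ j → (j + d, col) ∈ boxShape lam → f (j + d, col) < i →
      (j, col) ∈ boxShape lam ∧ f (j, col) < i := by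
  intro d
  induction d with
  | zero => exact fun j _ h1 h2 => ⟨h1, h2⟩
  | succ d ih =>
    intro j hj hcell hval
    have hin : f (j + (d + 1), col) ≤ n := fill_le hf hcell
    have hi1 : 1 ≤ f (j + (d + 1), col) := fill_ge hf hcell
    have hprev : (j + d, col) ∈ boxShape lam := col_contig hcell (by omega) (by omega)
    have hnei : f (j + d, col) ≠ f (j + (d + 1), col) := by
      intro h
      have := fill_inj hf hprev hcell h
      simp only [Prod.mk.injEq] at this
      omega
    have hlt : f (j + d, col) < f (j + (d + 1), col) := by
      by_contra hcon
      push_neg at hcon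
      have hshort : f (j + (d + 1), col) ∈ shorts n (boxShape lam) f := by
        rw [mem_shorts]
        refine ⟨⟨hi1, hin⟩, (j + (d + 1), col), hcell, rfl, Or.inl ⟨by omega, ?_, ?_⟩⟩
        · show (j + (d + 1) - 1, col) ∈ boxShape lam
          have he : j + (d + 1) - 1 = j + d := by omega
          rw [he]; exact hprev
        · show f (j + (d + 1), col) < f (j + (d + 1) - 1, col)
          have he : j + (d + 1) - 1 = j + d := by omega
          rw [he]; omega
      have := hmin _ hshort
      omega
    exact ih j hj hprev (by omega)

lemma step_val {i v : ℕ} {c c' : ℕ × ℕ} (hf : IsFillingF n (boxShape lam) f)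
    (hc : c ∈ boxShape lam) (hc' : c' ∈ boxShape lam) (hfc : f c = i) (hfc' : f c' = v)
    (hiv : i ≠ v) :
    ∀ x ∈ boxShape lam, mapEntries (boxShape lam) (Equiv.swap i v) f x =
      if x = c then v else if x = c' then i else f x := by
  intro x hx
  rw [mapEntries_apply hx]
  by_cases h1 : x = c
  · subst h1; rw [if_pos rfl, hfc, Equiv.swap_apply_left]
  · rw [if_neg h1]
    by_cases h2 : x = c'
    · subst h2; rw [if_pos rfl, hfc', Equiv.swap_apply_right]
    · rw [if_neg h2]
      exact Equiv.swap_apply_of_ne_of_ne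
        (fun h => h1 (fill_inj hf hx hc (h.trans hfc.symm)))
        (fun h => h2 (fill_inj hf hx hc' (h.trans hfc'.symm)))

end Walk
section Preserve
variable {n k : ℕ} {lam : YoungDiagram} {f : ℕ × ℕ → ℕ}

lemma inv_step (hk1 : 1 ≤ k) (hf : Inv n k lam f) :
    Inv n k lam (stepFun n (boxShape lam) f) := by
  by_cases hne : (shorts n (boxShape lam) f).Nonempty
  swap
  · rw [step_empty hne]; exact hf
  obtain ⟨i, v, c, c', hc, hc', adj, hfc, hfc', hik, hkv, hvn, hi1, hiS, himin, hstep,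
    hother⟩ := step_spec hk1 hf hne
  rw [hstep]
  set g := mapEntries (boxShape lam) (Equiv.swap i v) f with hgdef
  have hval : ∀ x ∈ boxShape lam, g x = if x = c then v else if x = c' then i else f x :=
    step_val hf.fill hc hc' hfc hfc' (by omega)
  have hcc' : c ≠ c' := by
    intro h
    rw [h, hfc'] at hfc
    omega
  have hcbox : c ≠ boxCell lam := by
    intro h
    have := hf.boxv
    rw [← h, hfc] at this
    omega
  have hc'box : c' ≠ boxCell lam := by
    intro h
    have := hf.boxv
    rw [← h, hfc'] at this
    omega
  obtain ⟨hcpos, hc'pos⟩ := no_box_adj hc hc' adj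
  have hgc : g c = v := by rw [hval c hc, if_pos rfl]
  have hgc' : g c' = i := by rw [hval c' hc', if_neg (Ne.symm hcc'), if_pos rfl]
  have hgo : ∀ x ∈ boxShape lam, x ≠ c → x ≠ c' → g x = f x := fun x hx h1 h2 => by
    rw [hval x hx, if_neg h1, if_neg h2]
  have hgfill : IsFillingF n (boxShape lam) g :=
    fill_mapEntries (swap_bijOn hi1 (by omega) (by omega) hvn) hf.fill
  have hgbox : g (boxCell lam) = k := by
    show mapEntries (boxShape lam) (⇑(Equiv.swap i v)) f (boxCell lam) = k
    rw [mapEntries_apply boxCell_mem, hf.boxv,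
      Equiv.swap_apply_of_ne_of_ne (by omega) (by omega)]
  have hsmall : RestrictedStd (boxShape lam) g (Finset.Icc 1 k) := by
    intro a ha b hb hga hgb h1 h2 hab
    rw [Finset.mem_Icc] at hga hgb
    by_cases hac : a = c
    · rw [hac, hgc] at hga; omega
    by_cases hbc : b = c
    · rw [hbc, hgc] at hgb; omega
    by_cases hbc' : b = c'
    · -- b = c' : use restricted standardness of f between a and c
      rw [hbc'] at h1 h2 hab
      rw [hbc', hgc']
      rw [hgo a ha hac hab] at hga ⊢
      have key := hf.small a ha c hc (Finset.mem_Icc.mpr hga)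
        (Finset.mem_Icc.mpr ⟨by omega, by omega⟩)
        (by rcases adj with ⟨e1, e2⟩ | ⟨e1, e2⟩ <;> omega)
        (by rcases adj with ⟨e1, e2⟩ | ⟨e1, e2⟩ <;> omega)
        hac
      rw [hfc] at key
      omega
    by_cases hac' : a = c'
    · -- a = c' : the hard case, walk along the row/column
      rw [hac'] at h1 h2 hab
      rw [hac', hgc']
      rw [hgo b hb hbc hbc'] at hgb ⊢
      by_contra hcon
      push_neg at hcon
      have hfbi : f b ≠ i := by
        intro h
        exact hbc (fill_inj hf.fill hb hc (h.trans hfc.symm))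
      have hfbi' : f b < i := by omega
      by_cases hcb : c.1 ≤ b.1 ∧ c.2 ≤ b.2
      · have key := hf.small c hc b hb (Finset.mem_Icc.mpr ⟨by omega, by omega⟩)
          (Finset.mem_Icc.mpr ⟨by omega, by omega⟩) hcb.1 hcb.2
          (by intro h; rw [← h, hfc] at hfbi; exact hfbi rfl)
        rw [hfc] at key
        omega
      · rcases adj with ⟨e1, e2⟩ | ⟨e1, e2⟩
        · -- c is below c' ; b is in the row of c', strictly right
          have hb1 : b.1 = c'.1 := by omega
          have hb2 : c'.2 + 1 ≤ b.2 := by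
            rcases Nat.lt_or_ge c'.2 b.2 with h | h
            · omega
            · exfalso
              exact hab (Prod.ext (by omega) (by omega)).symm
          have hbeq : b = (c'.1, c'.2 + 1 + (b.2 - (c'.2 + 1))) :=
            Prod.ext (by omega) (by omega)
          have hw := walk_row hf.fill himin hc'pos (b.2 - (c'.2 + 1)) (c'.2 + 1)
            (by rw [← hbeq]; exact hb) (by rw [← hbeq]; exact hfbi')
          have hsh : f (c'.1, c'.2 + 1) ∈ shorts n (boxShape lam) f := by
            rw [mem_shorts]
            refine ⟨⟨fill_ge hf.fill hw.1, fill_le hf.fill hw.1⟩,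
              (c'.1, c'.2 + 1), hw.1, rfl, Or.inr ⟨by omega, ?_, ?_⟩⟩
            · show (c'.1, c'.2 + 1 - 1) ∈ boxShape lam
              have he : c'.2 + 1 - 1 = c'.2 := by omega
              rw [he]; exact hc'
            · show f (c'.1, c'.2 + 1) < f (c'.1, c'.2 + 1 - 1)
              have he : c'.2 + 1 - 1 = c'.2 := by omega
              rw [he]
              have hvv : f (c'.1, c'.2) = v := hfc'
              omega
          have := himin _ hsh
          omega
        · -- c is right of c' ; b is in the column of c', strictly below
          have hb2 : b.2 = c'.2 := by omega
          have hb1 : c'.1 + 1 ≤ b.1 := by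
            rcases Nat.lt_or_ge c'.1 b.1 with h | h
            · omega
            · exfalso
              exact hab (Prod.ext (by omega) (by omega)).symm
          have hbeq : b = (c'.1 + 1 + (b.1 - (c'.1 + 1)), c'.2) :=
            Prod.ext (by omega) (by omega)
          have hw := walk_col hf.fill himin (b.1 - (c'.1 + 1)) (c'.1 + 1)
            (by omega) (by rw [← hbeq]; exact hb) (by rw [← hbeq]; exact hfbi')
          have hsh : f (c'.1 + 1, c'.2) ∈ shorts n (boxShape lam) f := by
            rw [mem_shorts]
            refine ⟨⟨fill_ge hf.fill hw.1, fill_le hf.fill hw.1⟩,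
              (c'.1 + 1, c'.2), hw.1, rfl, Or.inl ⟨by omega, ?_, ?_⟩⟩
            · show (c'.1 + 1 - 1, c'.2) ∈ boxShape lam
              have he : c'.1 + 1 - 1 = c'.1 := by omega
              rw [he]; exact hc'
            · show f (c'.1 + 1, c'.2) < f (c'.1 + 1 - 1, c'.2)
              have he : c'.1 + 1 - 1 = c'.1 := by omega
              rw [he]
              have hvv : f (c'.1, c'.2) = v := hfc'
              omega
          have := himin _ hsh
          omega
    · -- generic case
      rw [hgo a ha hac hac'] at hga ⊢
      rw [hgo b hb hbc hbc'] at hgb ⊢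
      exact hf.small a ha b hb (Finset.mem_Icc.mpr hga) (Finset.mem_Icc.mpr hgb) h1 h2 hab
  have hlarge : RestrictedStd (boxShape lam) g (Finset.Icc (k + 1) n) := by
    intro a ha b hb hga hgb h1 h2 hab
    rw [Finset.mem_Icc] at hga hgb
    by_cases hac' : a = c'
    · rw [hac', hgc'] at hga; omega
    by_cases hbc' : b = c'
    · rw [hbc', hgc'] at hgb; omega
    by_cases hac : a = c
    · -- a = c : compare via c'
      rw [hac] at h1 h2 hab
      rw [hac, hgc]
      have hbcne : b ≠ c := fun h => hab h.symm
      rw [hgo b hb hbcne hbc'] at hgb ⊢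
      have key := hf.large c' hc' b hb (Finset.mem_Icc.mpr ⟨by omega, by omega⟩)
        (Finset.mem_Icc.mpr hgb)
        (by rcases adj with ⟨e1, e2⟩ | ⟨e1, e2⟩ <;> omega)
        (by rcases adj with ⟨e1, e2⟩ | ⟨e1, e2⟩ <;> omega)
        (fun h => hbc' h.symm)
      rw [hfc'] at key
      omega
    by_cases hbc : b = c
    · -- b = c : the hard case
      rw [hbc] at h1 h2 hab
      rw [hbc, hgc]
      rw [hgo a ha hac hac'] at hga ⊢
      by_cases hacle : a.1 ≤ c'.1 ∧ a.2 ≤ c'.2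
      · have key := hf.large a ha c' hc' (Finset.mem_Icc.mpr hga)
          (Finset.mem_Icc.mpr ⟨by omega, by omega⟩) hacle.1 hacle.2 hac'
        rw [hfc'] at key
        omega
      · rcases adj with ⟨e1, e2⟩ | ⟨e1, e2⟩
        · -- c' above c ; a is in the row of c, strictly left
          have ha1 : a.1 = c.1 := by omega
          have ha2 : a.2 < c.2 := by
            rcases Nat.lt_or_ge a.2 c.2 with h | h
            · exact h
            · exfalso; exact hab (Prod.ext (by omega) (by omega))
          have hucell : (c.1, c.2 - 1) ∈ boxShape lam := row_contig hc (by omega) (by omega)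
          have huv : f (c.1, c.2 - 1) ≤ v := hother _ hucell (Or.inr ⟨rfl, by omega⟩)
          have hune : f (c.1, c.2 - 1) ≠ v := by
            intro h
            have h' := fill_inj hf.fill hucell hc' (h.trans hfc'.symm)
            have := congrArg Prod.fst h'
            simp only at this
            omega
          by_cases huk : k < f (c.1, c.2 - 1)
          · by_cases hau : a = (c.1, c.2 - 1)
            · rw [hau]; omega
            · have := hf.large a ha _ hucell (Finset.mem_Icc.mpr hga)
                (Finset.mem_Icc.mpr ⟨by omega, fill_le hf.fill hucell⟩)
                (by omega) (by omega) hau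
              omega
          · push_neg at huk
            have hui : f (c.1, c.2 - 1) < i := by
              have key := hf.small _ hucell c hc
                (Finset.mem_Icc.mpr ⟨fill_ge hf.fill hucell, huk⟩)
                (Finset.mem_Icc.mpr ⟨by omega, by omega⟩) (by omega) (by omega)
                (by
                  intro h
                  have := congrArg Prod.snd h
                  simp only at this
                  omega)
              rw [hfc] at key
              exact key
            have hueq : (c.1, c.2 - 1) = (c.1, a.2 + (c.2 - 1 - a.2)) :=
              Prod.ext rfl (by omega)
            have hw := walk_row hf.fill himin (r := c.1) (by omega) (c.2 - 1 - a.2) a.2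
              (by rw [← hueq]; exact hucell) (by rw [← hueq]; exact hui)
            have haeq : a = (c.1, a.2) := Prod.ext (by omega) rfl
            rw [← haeq] at hw
            omega
        · -- c' left of c ; a is in the column of c, strictly above
          have ha2 : a.2 = c.2 := by omega
          have ha1 : a.1 < c.1 := by
            rcases Nat.lt_or_ge a.1 c.1 with h | h
            · exact h
            · exfalso; exact hab (Prod.ext (by omega) (by omega))
          have hapos : 1 ≤ a.1 := by
            by_contra hcon2
            have hbx := box_of_row0 ha (by omega)
            have haa : a.2 = lam.rowLen 0 := by rw [hbx]; rfl
            have := part_col_lt hc hcpos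
            omega
          have hucell : (c.1 - 1, c.2) ∈ boxShape lam := col_contig hc (by omega) (by omega)
          have huv : f (c.1 - 1, c.2) ≤ v := hother _ hucell (Or.inl ⟨by omega, rfl⟩)
          have hune : f (c.1 - 1, c.2) ≠ v := by
            intro h
            have h' := fill_inj hf.fill hucell hc' (h.trans hfc'.symm)
            have := congrArg Prod.snd h'
            simp only at this
            omega
          by_cases huk : k < f (c.1 - 1, c.2)
          · by_cases hau : a = (c.1 - 1, c.2)
            · rw [hau]; omega
            · have := hf.large a ha _ hucell (Finset.mem_Icc.mpr hga)
                (Finset.mem_Icc.mpr ⟨by omega, fill_le hf.fill hucell⟩)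
                (by omega) (by omega) hau
              omega
          · push_neg at huk
            have hui : f (c.1 - 1, c.2) < i := by
              have key := hf.small _ hucell c hc
                (Finset.mem_Icc.mpr ⟨fill_ge hf.fill hucell, huk⟩)
                (Finset.mem_Icc.mpr ⟨by omega, by omega⟩) (by omega) (by omega)
                (by
                  intro h
                  have := congrArg Prod.fst h
                  simp only at this
                  omega)
              rw [hfc] at key
              exact key
            have hueq : (c.1 - 1, c.2) = (a.1 + (c.1 - 1 - a.1), c.2) :=
              Prod.ext (by omega) rfl
            have hw := walk_col hf.fill himin (c.1 - 1 - a.1) a.1 hapos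
              (by rw [← hueq]; exact hucell) (by rw [← hueq]; exact hui)
            have haeq : a = (a.1, c.2) := Prod.ext rfl (by omega)
            rw [← haeq] at hw
            omega
    · rw [hgo a ha hac hac'] at hga ⊢
      rw [hgo b hb hbc hbc'] at hgb ⊢
      exact hf.large a ha b hb (Finset.mem_Icc.mpr hga) (Finset.mem_Icc.mpr hgb) h1 h2 hab
  -- the J-invariant
  refine ⟨hgfill, hsmall, hlarge, hgbox, ?_⟩
  intro b hb d hd hadj hbk hdk s hs
  have hClaimS : i ≤ s := by
    obtain ⟨⟨hs1, hsn⟩, x, hx, hgxs, hdisj⟩ := mem_shorts.mp hs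
    by_cases hxc : x = c
    · rw [hxc, hgc] at hgxs; omega
    by_cases hxc' : x = c'
    · rw [hxc', hgc'] at hgxs; omega
    by_contra hcon
    push_neg at hcon
    rw [hgo x hx hxc hxc'] at hgxs
    rcases hdisj with ⟨h1, h2, h3⟩ | ⟨h1, h2, h3⟩
    · -- witness above x
      by_cases hyc : (x.1 - 1, x.2) = c
      · have e1 : x.1 - 1 = c.1 := by rw [← hyc]
        have e2 : x.2 = c.2 := by rw [← hyc]
        have key := hf.small c hc x hx (Finset.mem_Icc.mpr ⟨by omega, by omega⟩)
          (Finset.mem_Icc.mpr ⟨by omega, by omega⟩) (by omega) (by omega)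
          (fun h => hxc h.symm)
        rw [hfc, hgxs] at key
        omega
      by_cases hyc' : (x.1 - 1, x.2) = c'
      · have e1 : x.1 - 1 = c'.1 := by rw [← hyc']
        have e2 : x.2 = c'.2 := by rw [← hyc']
        have hgx : g x = f x := hgo x hx hxc hxc'
        have key := hsmall c' hc' x hx
          (Finset.mem_Icc.mpr (show 1 ≤ g c' ∧ g c' ≤ k by rw [hgc']; omega))
          (Finset.mem_Icc.mpr (show 1 ≤ g x ∧ g x ≤ k by rw [hgx, hgxs]; omega))
          (show c'.1 ≤ x.1 by omega) (show c'.2 ≤ x.2 by omega)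
          (fun h => hxc' h.symm)
        rw [hgc', hgx, hgxs] at key
        omega
      · rw [hgo _ h2 hyc hyc'] at h3
        have hsh : s ∈ shorts n (boxShape lam) f := by
          rw [mem_shorts]
          exact ⟨⟨hs1, hsn⟩, x, hx, hgxs, Or.inl ⟨h1, h2, h3⟩⟩
        have := himin _ hsh
        omega
    · -- witness left of x
      by_cases hyc : (x.1, x.2 - 1) = c
      · have e1 : x.1 = c.1 := by rw [← hyc]
        have e2 : x.2 - 1 = c.2 := by rw [← hyc]
        have key := hf.small c hc x hx (Finset.mem_Icc.mpr ⟨by omega, by omega⟩)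
          (Finset.mem_Icc.mpr ⟨by omega, by omega⟩) (by omega) (by omega)
          (fun h => hxc h.symm)
        rw [hfc, hgxs] at key
        omega
      by_cases hyc' : (x.1, x.2 - 1) = c'
      · have e1 : x.1 = c'.1 := by rw [← hyc']
        have e2 : x.2 - 1 = c'.2 := by rw [← hyc']
        have hgx : g x = f x := hgo x hx hxc hxc'
        have key := hsmall c' hc' x hx
          (Finset.mem_Icc.mpr (show 1 ≤ g c' ∧ g c' ≤ k by rw [hgc']; omega))
          (Finset.mem_Icc.mpr (show 1 ≤ g x ∧ g x ≤ k by rw [hgx, hgxs]; omega))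
          (show c'.1 ≤ x.1 by omega) (show c'.2 ≤ x.2 by omega)
          (fun h => hxc' h.symm)
        rw [hgc', hgx, hgxs] at key
        omega
      · rw [hgo _ h2 hyc hyc'] at h3
        have hsh : s ∈ shorts n (boxShape lam) f := by
          rw [mem_shorts]
          exact ⟨⟨hs1, hsn⟩, x, hx, hgxs, Or.inr ⟨h1, h2, h3⟩⟩
        have := himin _ hsh
        omega
  have hClaimB : g b ≤ i := by
    by_cases hbceq : b = c
    · rw [hbceq, hgc] at hbk; omega
    by_cases hbc'eq : b = c'
    · rw [hbc'eq, hgc']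
    · rw [hgo b hb hbceq hbc'eq] at hbk ⊢
      by_cases hdc' : d = c'
      · rw [hdc', hgc'] at hdk; omega
      by_cases hdc : d = c
      · have key := hf.small b hb c hc
          (Finset.mem_Icc.mpr ⟨fill_ge hf.fill hb, hbk⟩)
          (Finset.mem_Icc.mpr ⟨by omega, by omega⟩)
          (by rw [hdc] at hadj; rcases hadj with ⟨e1, e2⟩ | ⟨e1, e2⟩ <;> omega)
          (by rw [hdc] at hadj; rcases hadj with ⟨e1, e2⟩ | ⟨e1, e2⟩ <;> omega)
          hbceq
        rw [hfc] at key
        omega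
      · rw [hgo d hd hdc hdc'] at hdk
        exact hf.jinv b hb d hd hadj hbk hdk i hiS
  omega

end Preserve
section Run
variable {n k : ℕ} {lam : YoungDiagram} {f : ℕ × ℕ → ℕ}

lemma adj_row_lt (hf : IsFillingF n (boxShape lam) f)
    (hemp : ¬(shorts n (boxShape lam) f).Nonempty) {r j : ℕ} (hr : 1 ≤ r)
    (hcell : (r, j + 1) ∈ boxShape lam) : f (r, j) < f (r, j + 1) := by
  have hprev : (r, j) ∈ boxShape lam := row_contig hcell hr (by omega)
  have hne2 : f (r, j) ≠ f (r, j + 1) := fun h => by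
    have := fill_inj hf hprev hcell h
    simp only [Prod.mk.injEq] at this
    omega
  by_contra hcon
  push_neg at hcon
  apply hemp
  refine ⟨f (r, j + 1), mem_shorts.mpr ⟨⟨fill_ge hf hcell, fill_le hf hcell⟩,
    (r, j + 1), hcell, rfl, Or.inr ⟨by omega, ?_, ?_⟩⟩⟩
  · show (r, j + 1 - 1) ∈ boxShape lam
    exact hprev
  · show f (r, j + 1) < f (r, j)
    omega

lemma adj_col_lt (hf : IsFillingF n (boxShape lam) f)
    (hemp : ¬(shorts n (boxShape lam) f).Nonempty) {r j : ℕ} (hr : 1 ≤ r)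
    (hcell : (r + 1, j) ∈ boxShape lam) : f (r, j) < f (r + 1, j) := by
  have hprev : (r, j) ∈ boxShape lam := col_contig hcell hr (by omega)
  have hne2 : f (r, j) ≠ f (r + 1, j) := fun h => by
    have := fill_inj hf hprev hcell h
    simp only [Prod.mk.injEq] at this
    omega
  by_contra hcon
  push_neg at hcon
  apply hemp
  refine ⟨f (r + 1, j), mem_shorts.mpr ⟨⟨fill_ge hf hcell, fill_le hf hcell⟩,
    (r + 1, j), hcell, rfl, Or.inl ⟨by omega, ?_, ?_⟩⟩⟩
  · show (r + 1 - 1, j) ∈ boxShape lam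
    exact hprev
  · show f (r + 1, j) < f (r, j)
    omega

lemma std_of_shorts_empty (hf : IsFillingF n (boxShape lam) f)
    (hemp : ¬(shorts n (boxShape lam) f).Nonempty) :
    IsStandardF (boxShape lam) f := by
  constructor
  · intro a ha b hb h1 h2
    have hr : 1 ≤ a.1 := by
      by_contra h
      have hA := box_of_row0 ha (by omega)
      have hB := box_of_row0 hb (by omega)
      rw [hA] at h2
      rw [hB] at h2
      omega
    have claim : ∀ d j, (a.1, j + d + 1) ∈ boxShape lam →
        f (a.1, j) < f (a.1, j + d + 1) := by
      intro d
      induction d with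
      | zero => exact fun j hc => adj_row_lt hf hemp hr hc
      | succ d ih =>
        intro j hc
        have hmid : (a.1, j + d + 1) ∈ boxShape lam := row_contig hc hr (by omega)
        have hx := ih j hmid
        have hy : f (a.1, j + d + 1) < f (a.1, j + d + 1 + 1) :=
          adj_row_lt hf hemp hr (j := j + d + 1) (by
            have he : j + d + 1 + 1 = j + (d + 1) + 1 := by omega
            rw [he]; exact hc)
        have he : j + d + 1 + 1 = j + (d + 1) + 1 := by omega
        rw [he] at hy
        omega
    have hbeq : b = (a.1, a.2 + (b.2 - a.2 - 1) + 1) := Prod.ext (by omega) (by omega)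
    have haeq : a = (a.1, a.2) := rfl
    rw [hbeq]
    exact claim (b.2 - a.2 - 1) a.2 (by rw [← hbeq]; exact hb)
  · intro a ha b hb h1 h2
    have hr : 1 ≤ a.1 := by
      by_contra h
      have hA := box_of_row0 ha (by omega)
      have hb1 : 1 ≤ b.1 := by omega
      have := part_col_lt hb hb1
      have ha2 : a.2 = lam.rowLen 0 := by rw [hA]; rfl
      omega
    have claim : ∀ d j, 1 ≤ j → (j + d + 1, a.2) ∈ boxShape lam →
        f (j, a.2) < f (j + d + 1, a.2) := by
      intro d
      induction d with
      | zero => exact fun j hj hc => adj_col_lt hf hemp hj hc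
      | succ d ih =>
        intro j hj hc
        have hmid : (j + d + 1, a.2) ∈ boxShape lam := col_contig hc (by omega) (by omega)
        have hx := ih j hj hmid
        have hy : f (j + d + 1, a.2) < f (j + d + 1 + 1, a.2) :=
          adj_col_lt hf hemp (by omega) (by
            have he : j + d + 1 + 1 = j + (d + 1) + 1 := by omega
            rw [he]; exact hc)
        have he : j + d + 1 + 1 = j + (d + 1) + 1 := by omega
        rw [he] at hy
        omega
    have hbeq : b = (a.1 + (b.1 - a.1 - 1) + 1, a.2) := Prod.ext (by omega) (by omega)
    rw [hbeq]
    exact claim (b.1 - a.1 - 1) a.1 hr (by rw [← hbeq]; exact hb)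

/-- The potential function: strictly increases along `jdt` steps. -/
def PhiF (lam : YoungDiagram) (f : ℕ × ℕ → ℕ) : ℕ :=
  ∑ c ∈ boxShape lam, f c * (c.1 + c.2)

lemma phi_step_lt (hk1 : 1 ≤ k) (hf : Inv n k lam f)
    (hne : (shorts n (boxShape lam) f).Nonempty) :
    PhiF lam f < PhiF lam (stepFun n (boxShape lam) f) := by
  obtain ⟨i, v, c, c', hc, hc', adj, hfc, hfc', hik, hkv, hvn, hi1, hiS, himin, hstep,
    hother⟩ := step_spec hk1 hf hne
  rw [hstep]
  set g := mapEntries (boxShape lam) (Equiv.swap i v) f with hgdef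
  have hval : ∀ x ∈ boxShape lam, g x = if x = c then v else if x = c' then i else f x :=
    step_val hf.fill hc hc' hfc hfc' (by omega)
  have hcc' : c ≠ c' := by
    intro h
    rw [h, hfc'] at hfc
    omega
  have hgc : g c = v := by rw [hval c hc, if_pos rfl]
  have hgc' : g c' = i := by rw [hval c' hc', if_neg (Ne.symm hcc'), if_pos rfl]
  have hc'e : c' ∈ (boxShape lam).erase c := Finset.mem_erase.mpr ⟨Ne.symm hcc', hc'⟩
  have split1 : ∀ h : ℕ × ℕ → ℕ, ∑ x ∈ boxShape lam, h x * (x.1 + x.2) =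
      h c * (c.1 + c.2) + (h c' * (c'.1 + c'.2) +
        ∑ x ∈ ((boxShape lam).erase c).erase c', h x * (x.1 + x.2)) := by
    intro h
    rw [← Finset.add_sum_erase _ _ hc, ← Finset.add_sum_erase _ _ hc'e]
  have hrest : ∑ x ∈ ((boxShape lam).erase c).erase c', g x * (x.1 + x.2) =
      ∑ x ∈ ((boxShape lam).erase c).erase c', f x * (x.1 + x.2) := by
    refine Finset.sum_congr rfl fun x hx => ?_
    obtain ⟨hx1, hx2⟩ := Finset.mem_erase.mp hx
    obtain ⟨hx3, hx4⟩ := Finset.mem_erase.mp hx2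
    rw [hval x hx4, if_neg hx3, if_neg hx1]
  unfold PhiF
  rw [split1 g, split1 f, hrest, hgc, hgc', hfc, hfc']
  have hsum : c.1 + c.2 = c'.1 + c'.2 + 1 := by
    rcases adj with ⟨e1, e2⟩ | ⟨e1, e2⟩ <;> omega
  have e1 : i * (c.1 + c.2) = i * (c'.1 + c'.2) + i := by rw [hsum]; ring
  have e2 : v * (c.1 + c.2) = v * (c'.1 + c'.2) + v := by rw [hsum]; ring
  omega

lemma iter_inv (hk1 : 1 ≤ k) (hf : Inv n k lam f) (m : ℕ) :
    Inv n k lam ((stepFun n (boxShape lam))^[m] f) := by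
  induction m with
  | zero => exact hf
  | succ m ih => rw [Function.iterate_succ_apply']; exact inv_step hk1 ih

lemma exists_std_iter (hk1 : 1 ≤ k) (hf : Inv n k lam f) :
    ∃ m, IsStandardF (boxShape lam) ((stepFun n (boxShape lam))^[m] f) := by
  by_contra hcon
  push_neg at hcon
  have hmono : ∀ m, PhiF lam f + m ≤ PhiF lam ((stepFun n (boxShape lam))^[m] f) := by
    intro m
    induction m with
    | zero => rw [Function.iterate_zero_apply]; omega
    | succ m ih =>
      rw [Function.iterate_succ_apply']
      have hne : (shorts n (boxShape lam) ((stepFun n (boxShape lam))^[m] f)).Nonempty := by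
        by_contra h
        exact hcon m (std_of_shorts_empty (iter_inv hk1 hf m).fill h)
      have := phi_step_lt hk1 (iter_inv hk1 hf m) hne
      omega
  have hbound : ∀ g : ℕ × ℕ → ℕ, IsFillingF n (boxShape lam) g →
      PhiF lam g ≤ ∑ c ∈ boxShape lam, n * (c.1 + c.2) := fun g hg => by
    unfold PhiF
    exact Finset.sum_le_sum fun c hcm => Nat.mul_le_mul_right _ (fill_le hg hcm)
  have h1 := hmono (∑ c ∈ boxShape lam, n * (c.1 + c.2) + 1)
  have h2 := hbound
    ((stepFun n (boxShape lam))^[∑ c ∈ boxShape lam, n * (c.1 + c.2) + 1] f)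
    ((iter_inv hk1 hf (∑ c ∈ boxShape lam, n * (c.1 + c.2) + 1)).fill)
  omega

/-- Large entries occupy a NW-closed subset (an "order ideal"). -/
def IdealL (k : ℕ) (lam : YoungDiagram) (f : ℕ × ℕ → ℕ) : Prop :=
  ∀ c ∈ boxShape lam, ∀ d ∈ boxShape lam,
    ((c.1 = d.1 + 1 ∧ c.2 = d.2) ∨ (c.1 = d.1 ∧ c.2 = d.2 + 1)) → k < f c → k < f d

lemma not_idealL_step (hk1 : 1 ≤ k) (hf : Inv n k lam f)
    (hne : (shorts n (boxShape lam) f).Nonempty) :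
    ¬ IdealL k lam (stepFun n (boxShape lam) f) := by
  obtain ⟨i, v, c, c', hc, hc', adj, hfc, hfc', hik, hkv, hvn, hi1, hiS, himin, hstep,
    hother⟩ := step_spec hk1 hf hne
  rw [hstep]
  intro hI
  set g := mapEntries (boxShape lam) (Equiv.swap i v) f with hgdef
  have hval : ∀ x ∈ boxShape lam, g x = if x = c then v else if x = c' then i else f x :=
    step_val hf.fill hc hc' hfc hfc' (by omega)
  have hcc' : c ≠ c' := by
    intro h
    rw [h, hfc'] at hfc
    omega
  have hgc : g c = v := by rw [hval c hc, if_pos rfl]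
  have hgc' : g c' = i := by rw [hval c' hc', if_neg (Ne.symm hcc'), if_pos rfl]
  have := hI c hc c' hc' adj (by rw [hgc]; omega)
  rw [hgc'] at this
  omega

end Run
section Inj
variable {n k : ℕ} {lam : YoungDiagram} {f : ℕ × ℕ → ℕ}

lemma step_Bbound (hk1 : 1 ≤ k) (hf : Inv n k lam f) {i v : ℕ} {c c' : ℕ × ℕ}
    (hc : c ∈ boxShape lam) (hc' : c' ∈ boxShape lam)
    (adj : (c.1 = c'.1 + 1 ∧ c.2 = c'.2) ∨ (c.1 = c'.1 ∧ c.2 = c'.2 + 1))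
    (hfc : f c = i) (hfc' : f c' = v) (hik : i < k) (hkv : k < v) (hvn : v ≤ n)
    (hi1 : 1 ≤ i) (hiS : i ∈ shorts n (boxShape lam) f) :
    ∀ b ∈ boxShape lam, ∀ d ∈ boxShape lam,
      ((d.1 = b.1 + 1 ∧ d.2 = b.2) ∨ (d.1 = b.1 ∧ d.2 = b.2 + 1)) →
      mapEntries (boxShape lam) (Equiv.swap i v) f b ≤ k →
      k < mapEntries (boxShape lam) (Equiv.swap i v) f d →
      mapEntries (boxShape lam) (Equiv.swap i v) f b ≤ i := by
  intro b hb d hd hadj hbk hdk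
  set g := mapEntries (boxShape lam) (Equiv.swap i v) f with hgdef
  have hval : ∀ x ∈ boxShape lam, g x = if x = c then v else if x = c' then i else f x :=
    step_val hf.fill hc hc' hfc hfc' (by omega)
  have hcc' : c ≠ c' := by
    intro h
    rw [h, hfc'] at hfc
    omega
  have hgc : g c = v := by rw [hval c hc, if_pos rfl]
  have hgc' : g c' = i := by rw [hval c' hc', if_neg (Ne.symm hcc'), if_pos rfl]
  have hgo : ∀ x ∈ boxShape lam, x ≠ c → x ≠ c' → g x = f x := fun x hx h1 h2 => by
    rw [hval x hx, if_neg h1, if_neg h2]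
  by_cases hbceq : b = c
  · rw [hbceq, hgc] at hbk; omega
  by_cases hbc'eq : b = c'
  · rw [hbc'eq, hgc']
  · rw [hgo b hb hbceq hbc'eq] at hbk ⊢
    by_cases hdc' : d = c'
    · rw [hdc', hgc'] at hdk; omega
    by_cases hdc : d = c
    · have key := hf.small b hb c hc
        (Finset.mem_Icc.mpr ⟨fill_ge hf.fill hb, hbk⟩)
        (Finset.mem_Icc.mpr ⟨by omega, by omega⟩)
        (by rw [hdc] at hadj; rcases hadj with ⟨e1, e2⟩ | ⟨e1, e2⟩ <;> omega)
        (by rw [hdc] at hadj; rcases hadj with ⟨e1, e2⟩ | ⟨e1, e2⟩ <;> omega)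
        hbceq
      rw [hfc] at key
      omega
    · rw [hgo d hd hdc hdc'] at hdk
      exact hf.jinv b hb d hd hadj hbk hdk i hiS

lemma step_inj (hk1 : 1 ≤ k) {f1 f2 : ℕ × ℕ → ℕ} (hf1 : Inv n k lam f1)
    (hf2 : Inv n k lam f2) (hne1 : (shorts n (boxShape lam) f1).Nonempty)
    (hne2 : (shorts n (boxShape lam) f2).Nonempty)
    (heq : stepFun n (boxShape lam) f1 = stepFun n (boxShape lam) f2) : f1 = f2 := by
  obtain ⟨i1, v1, c1, c1', hc1, hc1', adj1, hfc1, hfc1', hik1, hkv1, hvn1, hi11, hiS1,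
    himin1, hstep1, hother1⟩ := step_spec hk1 hf1 hne1
  obtain ⟨i2, v2, c2, c2', hc2, hc2', adj2, hfc2, hfc2', hik2, hkv2, hvn2, hi21, hiS2,
    himin2, hstep2, hother2⟩ := step_spec hk1 hf2 hne2
  rw [hstep1, hstep2] at heq
  set g1 := mapEntries (boxShape lam) (Equiv.swap i1 v1) f1 with hg1def
  set g2 := mapEntries (boxShape lam) (Equiv.swap i2 v2) f2 with hg2def
  have hval1 : ∀ x ∈ boxShape lam, g1 x = if x = c1 then v1 else if x = c1' then i1 else f1 x :=
    step_val hf1.fill hc1 hc1' hfc1 hfc1' (by omega)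
  have hval2 : ∀ x ∈ boxShape lam, g2 x = if x = c2 then v2 else if x = c2' then i2 else f2 x :=
    step_val hf2.fill hc2 hc2' hfc2 hfc2' (by omega)
  have hcc1 : c1 ≠ c1' := by intro h; rw [h, hfc1'] at hfc1; omega
  have hcc2 : c2 ≠ c2' := by intro h; rw [h, hfc2'] at hfc2; omega
  have hg1c : g1 c1 = v1 := by rw [hval1 c1 hc1, if_pos rfl]
  have hg1c' : g1 c1' = i1 := by rw [hval1 c1' hc1', if_neg (Ne.symm hcc1), if_pos rfl]
  have hg2c : g2 c2 = v2 := by rw [hval2 c2 hc2, if_pos rfl]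
  have hg2c' : g2 c2' = i2 := by rw [hval2 c2' hc2', if_neg (Ne.symm hcc2), if_pos rfl]
  have hle12 : i1 ≤ i2 := by
    have hB := step_Bbound hk1 hf2 hc2 hc2' adj2 hfc2 hfc2' hik2 hkv2 hvn2 hi21 hiS2
      c1' hc1' c1 hc1 adj1 (show g2 c1' ≤ k by rw [← heq, hg1c']; omega)
      (show k < g2 c1 by rw [← heq, hg1c]; omega)
    have hB' : g2 c1' ≤ i2 := hB
    rw [← heq, hg1c'] at hB'
    exact hB'
  have hle21 : i2 ≤ i1 := by
    have hB := step_Bbound hk1 hf1 hc1 hc1' adj1 hfc1 hfc1' hik1 hkv1 hvn1 hi11 hiS1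
      c2' hc2' c2 hc2 adj2 (show g1 c2' ≤ k by rw [heq, hg2c']; omega)
      (show k < g1 c2 by rw [heq, hg2c]; omega)
    have hB' : g1 c2' ≤ i1 := hB
    rw [heq, hg2c'] at hB'
    exact hB'
  have hii : i1 = i2 := le_antisymm hle12 hle21
  have hgfill1 : IsFillingF n (boxShape lam) g1 :=
    fill_mapEntries (swap_bijOn hi11 (by omega) (by omega) hvn1) hf1.fill
  have hg1c2' : g1 c2' = i1 := by rw [heq, hg2c', hii]
  have hcell : c1' = c2' := fill_inj hgfill1 hc1' hc2' (by rw [hg1c', hg1c2'])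
  have hp1 : c2'.1 = c1'.1 := by rw [hcell]
  have hp2 : c2'.2 = c1'.2 := by rw [hcell]
  -- v1 = v2
  have hvv : v1 = v2 := by
    rcases adj1 with ⟨a1, a2⟩ | ⟨a1, a2⟩ <;> rcases adj2 with ⟨b1, b2⟩ | ⟨b1, b2⟩
    · have hcc : c1 = c2 := Prod.ext (by omega) (by omega)
      rw [← hg1c, hcc, heq, hg2c]
    · -- c1 below c1', c2 right of c2' : contradiction
      exfalso
      have hc12 : c1 ≠ c2 := by
        intro h
        have := congrArg Prod.fst h
        omega
      have hc2ne' : c2 ≠ c1' := by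
        intro h
        have := congrArg Prod.snd h
        omega
      have hf1c2 : f1 c2 = v2 := by
        have h' : g1 c2 = v2 := by rw [heq, hg2c]
        rw [hval1 c2 hc2, if_neg (Ne.symm hc12), if_neg hc2ne'] at h'
        exact h'
      have hv12 : v1 < v2 := by
        have key := hf1.large c1' hc1' c2 hc2
          (Finset.mem_Icc.mpr ⟨by omega, by omega⟩)
          (Finset.mem_Icc.mpr ⟨by rw [hf1c2]; omega, by rw [hf1c2]; omega⟩)
          (by omega) (by omega)
          (by intro h; rw [h] at hc2ne'; exact hc2ne' rfl)
        rw [hfc1', hf1c2] at key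
        exact key
      have hc1ne2' : c1 ≠ c2' := by
        intro h
        have := congrArg Prod.fst h
        omega
      have hf2c1 : f2 c1 = v1 := by
        have h' : g2 c1 = v1 := by rw [← heq, hg1c]
        rw [hval2 c1 hc1, if_neg hc12, if_neg hc1ne2'] at h'
        exact h'
      have hv21 : v2 < v1 := by
        have key := hf2.large c2' hc2' c1 hc1
          (Finset.mem_Icc.mpr ⟨by omega, by omega⟩)
          (Finset.mem_Icc.mpr ⟨by rw [hf2c1]; omega, by rw [hf2c1]; omega⟩)
          (by omega) (by omega)
          (by intro h; rw [h] at hc1ne2'; exact hc1ne2' rfl)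
        rw [hfc2', hf2c1] at key
        exact key
      omega
    · -- c1 right of c1', c2 below c2' : symmetric contradiction
      exfalso
      have hc12 : c1 ≠ c2 := by
        intro h
        have := congrArg Prod.fst h
        omega
      have hc2ne' : c2 ≠ c1' := by
        intro h
        have := congrArg Prod.fst h
        omega
      have hf1c2 : f1 c2 = v2 := by
        have h' : g1 c2 = v2 := by rw [heq, hg2c]
        rw [hval1 c2 hc2, if_neg (Ne.symm hc12), if_neg hc2ne'] at h'
        exact h'
      have hv12 : v1 < v2 := by
        have key := hf1.large c1' hc1' c2 hc2
          (Finset.mem_Icc.mpr ⟨by omega, by omega⟩)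
          (Finset.mem_Icc.mpr ⟨by rw [hf1c2]; omega, by rw [hf1c2]; omega⟩)
          (by omega) (by omega)
          (by intro h; rw [h] at hc2ne'; exact hc2ne' rfl)
        rw [hfc1', hf1c2] at key
        exact key
      have hc1ne2' : c1 ≠ c2' := by
        intro h
        have := congrArg Prod.snd h
        omega
      have hf2c1 : f2 c1 = v1 := by
        have h' : g2 c1 = v1 := by rw [← heq, hg1c]
        rw [hval2 c1 hc1, if_neg hc12, if_neg hc1ne2'] at h'
        exact h'
      have hv21 : v2 < v1 := by
        have key := hf2.large c2' hc2' c1 hc1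
          (Finset.mem_Icc.mpr ⟨by omega, by omega⟩)
          (Finset.mem_Icc.mpr ⟨by rw [hf2c1]; omega, by rw [hf2c1]; omega⟩)
          (by omega) (by omega)
          (by intro h; rw [h] at hc1ne2'; exact hc1ne2' rfl)
        rw [hfc2', hf2c1] at key
        exact key
      omega
    · have hcc : c1 = c2 := Prod.ext (by omega) (by omega)
      rw [← hg1c, hcc, heq, hg2c]
  have hback1 : mapEntries (boxShape lam) (Equiv.swap i1 v1) g1 = f1 :=
    mapEntries_cancel hf1.fill (fun e _ _ => Equiv.swap_apply_self _ _ _)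
  have hback2 : mapEntries (boxShape lam) (Equiv.swap i2 v2) g2 = f2 :=
    mapEntries_cancel hf2.fill (fun e _ _ => Equiv.swap_apply_self _ _ _)
  calc f1 = mapEntries (boxShape lam) (Equiv.swap i1 v1) g1 := hback1.symm
    _ = mapEntries (boxShape lam) (Equiv.swap i2 v2) g2 := by rw [hii, hvv, heq]
    _ = f2 := hback2

lemma run_cancel (hk1 : 1 ≤ k) {f1 f2 : ℕ × ℕ → ℕ} (hf1 : Inv n k lam f1)
    (hf2 : Inv n k lam f2) (hI1 : IdealL k lam f1) (hI2 : IdealL k lam f2) :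
    ∀ m1 m2 : ℕ,
      (∀ j, j < m1 → ¬ IsStandardF (boxShape lam) ((stepFun n (boxShape lam))^[j] f1)) →
      (∀ j, j < m2 → ¬ IsStandardF (boxShape lam) ((stepFun n (boxShape lam))^[j] f2)) →
      (stepFun n (boxShape lam))^[m1] f1 = (stepFun n (boxShape lam))^[m2] f2 →
      f1 = f2 := by
  intro m1
  induction m1 with
  | zero =>
    intro m2 h1 h2 heq
    cases m2 with
    | zero => simpa using heq
    | succ m2 =>
      exfalso
      have hinv2 : Inv n k lam ((stepFun n (boxShape lam))^[m2] f2) := iter_inv hk1 hf2 m2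
      have hne : (shorts n (boxShape lam) ((stepFun n (boxShape lam))^[m2] f2)).Nonempty := by
        by_contra h
        exact h2 m2 (by omega) (std_of_shorts_empty hinv2.fill h)
      apply not_idealL_step hk1 hinv2 hne
      rw [Function.iterate_succ_apply'] at heq
      rw [← heq]
      simpa using hI1
  | succ m1 ih =>
    intro m2 h1 h2 heq
    cases m2 with
    | zero =>
      exfalso
      have hinv1 : Inv n k lam ((stepFun n (boxShape lam))^[m1] f1) := iter_inv hk1 hf1 m1
      have hne : (shorts n (boxShape lam) ((stepFun n (boxShape lam))^[m1] f1)).Nonempty := by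
        by_contra h
        exact h1 m1 (by omega) (std_of_shorts_empty hinv1.fill h)
      apply not_idealL_step hk1 hinv1 hne
      rw [Function.iterate_succ_apply'] at heq
      rw [heq]
      simpa using hI2
    | succ m2 =>
      rw [Function.iterate_succ_apply', Function.iterate_succ_apply'] at heq
      have hinv1 : Inv n k lam ((stepFun n (boxShape lam))^[m1] f1) := iter_inv hk1 hf1 m1
      have hinv2 : Inv n k lam ((stepFun n (boxShape lam))^[m2] f2) := iter_inv hk1 hf2 m2
      have hne1 : (shorts n (boxShape lam) ((stepFun n (boxShape lam))^[m1] f1)).Nonempty := by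
        by_contra h
        exact h1 m1 (by omega) (std_of_shorts_empty hinv1.fill h)
      have hne2 : (shorts n (boxShape lam) ((stepFun n (boxShape lam))^[m2] f2)).Nonempty := by
        by_contra h
        exact h2 m2 (by omega) (std_of_shorts_empty hinv2.fill h)
      have := step_inj hk1 hinv1 hinv2 hne1 hne2 heq
      exact ih m2 (fun j hj => h1 j (by omega)) (fun j hj => h2 j (by omega)) this

end Inj
section Init
variable {n k : ℕ} {lam : YoungDiagram} {T : ℕ × ℕ → ℕ}

lemma rot_inv (hk1 : 1 ≤ k) (hkn : k < n) (hT : IsFillingF n (boxShape lam) T)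
    (hTs : IsStandardF (boxShape lam) T) (hTd : T (boxCell lam) = n) :
    Inv n k lam (mapEntries (boxShape lam) (rotval n k) T) := by
  set g := mapEntries (boxShape lam) (rotval n k) T with hgdef
  have hgval : ∀ x ∈ boxShape lam, g x = rotval n k (T x) := fun x hx =>
    mapEntries_apply hx
  have hfill : IsFillingF n (boxShape lam) g :=
    fill_mapEntries (rotval_bijOn (by omega) (by omega)) hT
  have hbox : g (boxCell lam) = k := by
    rw [hgval _ boxCell_mem, hTd, rotval_high (by omega) (by omega) le_rfl (by omega)]
    omega
  -- value analysis
  have hsplit : ∀ x ∈ boxShape lam, (n < T x + k ∧ g x = T x + k - n) ∨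
      (T x + k ≤ n ∧ g x = T x + k) := by
    intro x hx
    have h1 := fill_ge hT hx
    have h2 := fill_le hT hx
    rcases Nat.lt_or_ge n (T x + k) with h | h
    · exact Or.inl ⟨h, by rw [hgval x hx, rotval_high (by omega) h h2 h1]⟩
    · exact Or.inr ⟨h, by rw [hgval x hx, rotval_low h1 h]⟩
  refine ⟨hfill, ?_, ?_, hbox, ?_⟩
  · intro a ha b hb hva hvb h1 h2 hne
    rw [Finset.mem_Icc] at hva hvb
    have hlt := std_NW hT hTs ha hb h1 h2 hne
    have ba1 := fill_ge hT ha
    have ba2 := fill_le hT ha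
    have bb1 := fill_ge hT hb
    have bb2 := fill_le hT hb
    rcases hsplit a ha with ⟨p1, p2⟩ | ⟨p1, p2⟩
    · rcases hsplit b hb with ⟨q1, q2⟩ | ⟨q1, q2⟩ <;> omega
    · omega
  · intro a ha b hb hva hvb h1 h2 hne
    rw [Finset.mem_Icc] at hva hvb
    have hlt := std_NW hT hTs ha hb h1 h2 hne
    have ba1 := fill_ge hT ha
    have ba2 := fill_le hT ha
    have bb1 := fill_ge hT hb
    have bb2 := fill_le hT hb
    rcases hsplit a ha with ⟨p1, p2⟩ | ⟨p1, p2⟩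
    · omega
    · rcases hsplit b hb with ⟨q1, q2⟩ | ⟨q1, q2⟩ <;> omega
  · intro b hb d hd hadj hbk hdk s hs
    exfalso
    have hne : b ≠ d := by
      intro h
      rw [h] at hadj
      rcases hadj with ⟨e1, e2⟩ | ⟨e1, e2⟩ <;> omega
    have hlt := std_NW hT hTs hb hd
      (by rcases hadj with ⟨e1, e2⟩ | ⟨e1, e2⟩ <;> omega)
      (by rcases hadj with ⟨e1, e2⟩ | ⟨e1, e2⟩ <;> omega) hne
    have ba1 := fill_ge hT hb
    have ba2 := fill_le hT hb
    have bb1 := fill_ge hT hd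
    have bb2 := fill_le hT hd
    rcases hsplit b hb with ⟨p1, p2⟩ | ⟨p1, p2⟩ <;>
      rcases hsplit d hd with ⟨q1, q2⟩ | ⟨q1, q2⟩ <;> omega

lemma rot_ideal (hk1 : 1 ≤ k) (hkn : k < n) (hT : IsFillingF n (boxShape lam) T)
    (hTs : IsStandardF (boxShape lam) T) (hTd : T (boxCell lam) = n) :
    IdealL k lam (mapEntries (boxShape lam) (rotval n k) T) := by
  set g := mapEntries (boxShape lam) (rotval n k) T with hgdef
  have hgval : ∀ x ∈ boxShape lam, g x = rotval n k (T x) := fun x hx =>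
    mapEntries_apply hx
  have hsplit : ∀ x ∈ boxShape lam, (n < T x + k ∧ g x = T x + k - n) ∨
      (T x + k ≤ n ∧ g x = T x + k) := by
    intro x hx
    have h1 := fill_ge hT hx
    have h2 := fill_le hT hx
    rcases Nat.lt_or_ge n (T x + k) with h | h
    · exact Or.inl ⟨h, by rw [hgval x hx, rotval_high (by omega) h h2 h1]⟩
    · exact Or.inr ⟨h, by rw [hgval x hx, rotval_low h1 h]⟩
  intro c hc d hd hadj hck
  have hne : d ≠ c := by
    intro h
    rw [h] at hadj
    rcases hadj with ⟨e1, e2⟩ | ⟨e1, e2⟩ <;> omega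
  have hlt := std_NW hT hTs hd hc
    (by rcases hadj with ⟨e1, e2⟩ | ⟨e1, e2⟩ <;> omega)
    (by rcases hadj with ⟨e1, e2⟩ | ⟨e1, e2⟩ <;> omega) hne
  have hd1 := fill_ge hT hd
  have hd2 := fill_le hT hd
  have hc1 := fill_ge hT hc
  have hc2 := fill_le hT hc
  rcases hsplit c hc with ⟨p1, p2⟩ | ⟨p1, p2⟩
  · omega
  · rcases hsplit d hd with ⟨q1, q2⟩ | ⟨q1, q2⟩ <;> omega

end Init
section Count
variable {n k : ℕ} {lam : YoungDiagram} {T : ℕ × ℕ → ℕ}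

lemma fillings_finite : {f : ℕ × ℕ → ℕ | IsFillingF n (boxShape lam) f}.Finite := by
  have hinj : Set.InjOn
      (fun f (c : {x // x ∈ boxShape lam}) => (⟨min (f c.1) n, by omega⟩ : Fin (n + 1)))
      {f : ℕ × ℕ → ℕ | IsFillingF n (boxShape lam) f} := by
    intro f1 h1 f2 h2 heq
    funext c
    by_cases hc : c ∈ boxShape lam
    · have := congrFun heq ⟨c, hc⟩
      simp only [Fin.mk.injEq] at this
      have b1 := fill_le h1 hc
      have b2 := fill_le h2 hc
      omega
    · rw [h1.2 c hc, h2.2 c hc]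
  exact Set.Finite.of_finite_image (Set.toFinite _) hinj

lemma std_mapEntries_of (hT : IsFillingF n (boxShape lam) T)
    (hTs : IsStandardF (boxShape lam) T) {φ : ℕ → ℕ}
    (hmono : ∀ x y, 1 ≤ x → y ≤ n → x ≠ T (boxCell lam) → y ≠ T (boxCell lam) →
      x < y → φ x < φ y) :
    IsStandardF (boxShape lam) (mapEntries (boxShape lam) φ T) := by
  constructor
  · intro a ha b hb h1 h2
    rw [mapEntries_apply ha, mapEntries_apply hb]
    have hab : a ≠ b := by intro h; rw [h] at h2; omega
    have hA : a ≠ boxCell lam := by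
      intro h
      have hb0 : b.1 = 0 := by rw [← h1, h]; rfl
      exact hab (by rw [h, ← box_of_row0 hb hb0])
    have hB : b ≠ boxCell lam := by
      intro h
      have ha0 : a.1 = 0 := by rw [h1, h]; rfl
      exact hab (by rw [box_of_row0 ha ha0, h])
    exact hmono _ _ (fill_ge hT ha) (fill_le hT hb)
      (fun hh => hA (fill_inj hT ha boxCell_mem hh))
      (fun hh => hB (fill_inj hT hb boxCell_mem hh))
      (hTs.1 a ha b hb h1 h2)
  · intro a ha b hb h1 h2
    rw [mapEntries_apply ha, mapEntries_apply hb]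
    have hab : a ≠ b := by intro h; rw [h] at h2; omega
    have hB : b ≠ boxCell lam := by
      intro h
      have : b.1 = 0 := by rw [h]; rfl
      omega
    have hA : a ≠ boxCell lam := by
      intro h
      have ha2 : a.2 = lam.rowLen 0 := by rw [h]; rfl
      have := part_col_lt hb (ne_box_pos hb hB)
      omega
    exact hmono _ _ (fill_ge hT ha) (fill_le hT hb)
      (fun hh => hA (fill_inj hT ha boxCell_mem hh))
      (fun hh => hB (fill_inj hT hb boxCell_mem hh))
      (hTs.2 a ha b hb h1 h2)

/-- The order-preserving relabeling bijection between standard fillings with box entry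
`n` and those with box entry `kk`. -/
lemma relabel_sets (hn : 1 ≤ n) {kk : ℕ} (hkk1 : 1 ≤ kk) (hkkn : kk ≤ n) :
    {P : ℕ × ℕ → ℕ | IsFillingF n (boxShape lam) P ∧ IsStandardF (boxShape lam) P ∧
        P (boxCell lam) = kk} =
      (mapEntries (boxShape lam) (fun e => if e = n then kk else if kk ≤ e then e + 1 else e)) ''
      {M : ℕ × ℕ → ℕ | IsFillingF n (boxShape lam) M ∧ IsStandardF (boxShape lam) M ∧
        M (boxCell lam) = n} ∧
    Set.InjOn
      (mapEntries (boxShape lam) (fun e => if e = n then kk else if kk ≤ e then e + 1 else e))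
      {M : ℕ × ℕ → ℕ | IsFillingF n (boxShape lam) M ∧ IsStandardF (boxShape lam) M ∧
        M (boxCell lam) = n} := by
  set φ : ℕ → ℕ := fun e => if e = n then kk else if kk ≤ e then e + 1 else e with hφdef
  set ψ : ℕ → ℕ := fun e => if e = kk then n else if kk < e then e - 1 else e with hψdef
  have hψφ : ∀ e, 1 ≤ e → e ≤ n → ψ (φ e) = e := by
    intro e he1 he2
    show (if (if e = n then kk else if kk ≤ e then e + 1 else e) = kk then n
      else if kk < (if e = n then kk else if kk ≤ e then e + 1 else e) then
        (if e = n then kk else if kk ≤ e then e + 1 else e) - 1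
      else (if e = n then kk else if kk ≤ e then e + 1 else e)) = e
    split_ifs <;> omega
  have hφψ : ∀ e, 1 ≤ e → e ≤ n → φ (ψ e) = e := by
    intro e he1 he2
    show (if (if e = kk then n else if kk < e then e - 1 else e) = n then kk
      else if kk ≤ (if e = kk then n else if kk < e then e - 1 else e) then
        (if e = kk then n else if kk < e then e - 1 else e) + 1
      else (if e = kk then n else if kk < e then e - 1 else e)) = e
    split_ifs <;> omega
  have hφmaps : ∀ e, 1 ≤ e → e ≤ n → 1 ≤ φ e ∧ φ e ≤ n := by
    intro e he1 he2
    show 1 ≤ (if e = n then kk else if kk ≤ e then e + 1 else e) ∧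
      (if e = n then kk else if kk ≤ e then e + 1 else e) ≤ n
    split_ifs <;> omega
  have hψmaps : ∀ e, 1 ≤ e → e ≤ n → 1 ≤ ψ e ∧ ψ e ≤ n := by
    intro e he1 he2
    show 1 ≤ (if e = kk then n else if kk < e then e - 1 else e) ∧
      (if e = kk then n else if kk < e then e - 1 else e) ≤ n
    split_ifs <;> omega
  have hφbij : Set.BijOn φ (Set.Icc 1 n) (Set.Icc 1 n) := by
    refine ⟨fun x hx => hφmaps x hx.1 hx.2, ?_, ?_⟩
    · intro x hx y hy h
      calc x = ψ (φ x) := (hψφ x hx.1 hx.2).symm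
        _ = ψ (φ y) := by rw [h]
        _ = y := hψφ y hy.1 hy.2
    · intro y hy
      exact ⟨ψ y, hψmaps y hy.1 hy.2, hφψ y hy.1 hy.2⟩
  have hψbij : Set.BijOn ψ (Set.Icc 1 n) (Set.Icc 1 n) := by
    refine ⟨fun x hx => hψmaps x hx.1 hx.2, ?_, ?_⟩
    · intro x hx y hy h
      calc x = φ (ψ x) := (hφψ x hx.1 hx.2).symm
        _ = φ (ψ y) := by rw [h]
        _ = y := hφψ y hy.1 hy.2
    · intro y hy
      exact ⟨φ y, hφmaps y hy.1 hy.2, hψφ y hy.1 hy.2⟩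
  have hinj : Set.InjOn (mapEntries (boxShape lam) φ)
      {M : ℕ × ℕ → ℕ | IsFillingF n (boxShape lam) M ∧ IsStandardF (boxShape lam) M ∧
        M (boxCell lam) = n} := by
    intro f1 h1 f2 h2 heq
    have e1 : mapEntries (boxShape lam) ψ (mapEntries (boxShape lam) φ f1) = f1 :=
      mapEntries_cancel h1.1 hψφ
    have e2 : mapEntries (boxShape lam) ψ (mapEntries (boxShape lam) φ f2) = f2 :=
      mapEntries_cancel h2.1 hψφ
    rw [← e1, ← e2, heq]
  refine ⟨Set.Subset.antisymm ?_ ?_, hinj⟩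
  · -- P with box entry kk is the image of mapEntries ψ P
    rintro P ⟨hP1, hP2, hP3⟩
    refine ⟨mapEntries (boxShape lam) ψ P, ⟨fill_mapEntries hψbij hP1, ?_, ?_⟩, ?_⟩
    · refine std_mapEntries_of hP1 hP2 ?_
      rw [hP3]
      intro x y hx1 hy2 hxk hyk hxy
      show (if x = kk then n else if kk < x then x - 1 else x) <
        (if y = kk then n else if kk < y then y - 1 else y)
      split_ifs <;> omega
    · rw [mapEntries_apply boxCell_mem, hP3]
      show (if kk = kk then n else if kk < kk then kk - 1 else kk) = n
      rw [if_pos rfl]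
    · exact mapEntries_cancel hP1 hφψ
  · rintro P ⟨M, ⟨hM1, hM2, hM3⟩, rfl⟩
    refine ⟨fill_mapEntries hφbij hM1, ?_, ?_⟩
    · refine std_mapEntries_of hM1 hM2 ?_
      rw [hM3]
      intro x y hx1 hy2 hxk hyk hxy
      show (if x = n then kk else if kk ≤ x then x + 1 else x) <
        (if y = n then kk else if kk ≤ y then y + 1 else y)
      split_ifs <;> omega
    · rw [mapEntries_apply boxCell_mem, hM3]
      show (if n = n then kk else if kk ≤ n then n + 1 else n) = kk
      rw [if_pos rfl]

end Count


/-- Lemma 4.3. For every `λ ⊢ n-1` and `0 ≤ k < n`, the map `jdt` is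
a bijection from `{k+T : T ∈ SYT(λ^□), δ(T) = n}` onto `{P ∈ SYT(λ^□) : δ(P) = k}`
(where the value `k` is taken modulo `n` with representative in `{1,…,n}`). -/
theorem jdt_bijective (n : ℕ) (lam : YoungDiagram) (hlam : lam.cells.card = n - 1)
    (k : ℕ) (hk : k < n) :
    Set.BijOn (jdtFun n (boxShape lam))
      {f | ∃ T : ℕ × ℕ → ℕ, IsFillingF n (boxShape lam) T ∧
        IsStandardF (boxShape lam) T ∧ deltaOf lam T = n ∧
        f = mapEntries (boxShape lam) (rotval n k) T}
      {P | IsFillingF n (boxShape lam) P ∧ IsStandardF (boxShape lam) P ∧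
        deltaOf lam P = rotval n k n} := by
  have hn1 : 1 ≤ n := by omega
  by_cases hk0 : k = 0
  · -- the case k = 0 : everything is the identity
    subst hk0
    have hrot : ∀ e, 1 ≤ e → e ≤ n → rotval n 0 e = e := fun e h1 h2 => by
      rw [rotval_low h1 (by omega)]
      omega
    have hzn : rotval n 0 n = n := hrot n hn1 le_rfl
    have hid : ∀ T : ℕ × ℕ → ℕ, IsFillingF n (boxShape lam) T →
        mapEntries (boxShape lam) (rotval n 0) T = T := fun T hT =>
      mapEntries_eq_self T (fun c hc => hrot _ (fill_ge hT hc) (fill_le hT hc)) hT.2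
    have hjdt : ∀ f, IsFillingF n (boxShape lam) f → IsStandardF (boxShape lam) f →
        jdtFun n (boxShape lam) f = f := by
      intro f hf hstd
      have hex : ∃ m, IsStandardF (boxShape lam) ((stepFun n (boxShape lam))^[m] f) :=
        ⟨0, hstd⟩
      unfold jdtFun
      rw [dif_pos hex]
      have h0 : Nat.find hex = 0 := (Nat.find_eq_zero hex).mpr hstd
      rw [h0]
      rfl
    refine ⟨?_, ?_, ?_⟩
    · rintro f ⟨T, h1, h2, h3, rfl⟩
      rw [Set.mem_setOf_eq, hid T h1, hjdt T h1 h2]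
      exact ⟨h1, h2, by rw [h3, hzn]⟩
    · rintro f1 ⟨T1, h11, h12, h13, rfl⟩ f2 ⟨T2, h21, h22, h23, rfl⟩ heq
      rw [hid T1 h11, hid T2 h21] at heq ⊢
      rw [hjdt T1 h11 h12, hjdt T2 h21 h22] at heq
      exact heq
    · rintro P ⟨hP1, hP2, hP3⟩
      exact ⟨P, ⟨P, hP1, hP2, by rw [hP3, hzn], (hid P hP1).symm⟩, hjdt P hP1 hP2⟩
  · -- the case 1 ≤ k
    have hk1 : 1 ≤ k := by omega
    have hkk : rotval n k n = k := by
      rw [rotval_high (by omega) (by omega) le_rfl hn1]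
      omega
    have hmaps : Set.MapsTo (jdtFun n (boxShape lam))
        {f | ∃ T : ℕ × ℕ → ℕ, IsFillingF n (boxShape lam) T ∧
          IsStandardF (boxShape lam) T ∧ deltaOf lam T = n ∧
          f = mapEntries (boxShape lam) (rotval n k) T}
        {P | IsFillingF n (boxShape lam) P ∧ IsStandardF (boxShape lam) P ∧
          deltaOf lam P = rotval n k n} := by
      rintro f ⟨T, h1, h2, h3, rfl⟩
      have hInv := rot_inv hk1 hk h1 h2 h3
      have hex := exists_std_iter hk1 hInv
      have hjdt : jdtFun n (boxShape lam) (mapEntries (boxShape lam) (rotval n k) T) =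
          (stepFun n (boxShape lam))^[Nat.find hex]
            (mapEntries (boxShape lam) (rotval n k) T) := by
        unfold jdtFun
        rw [dif_pos hex]
      rw [Set.mem_setOf_eq, hjdt]
      refine ⟨(iter_inv hk1 hInv _).fill, Nat.find_spec hex, ?_⟩
      show _ = rotval n k n
      rw [hkk]
      exact (iter_inv hk1 hInv _).boxv
    have hinj : Set.InjOn (jdtFun n (boxShape lam))
        {f | ∃ T : ℕ × ℕ → ℕ, IsFillingF n (boxShape lam) T ∧
          IsStandardF (boxShape lam) T ∧ deltaOf lam T = n ∧
          f = mapEntries (boxShape lam) (rotval n k) T} := by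
      rintro f1 ⟨T1, h11, h12, h13, rfl⟩ f2 ⟨T2, h21, h22, h23, rfl⟩ heq
      have hInv1 := rot_inv hk1 hk h11 h12 h13
      have hInv2 := rot_inv hk1 hk h21 h22 h23
      have hex1 := exists_std_iter hk1 hInv1
      have hex2 := exists_std_iter hk1 hInv2
      have hjdt1 : jdtFun n (boxShape lam) (mapEntries (boxShape lam) (rotval n k) T1) =
          (stepFun n (boxShape lam))^[Nat.find hex1]
            (mapEntries (boxShape lam) (rotval n k) T1) := by
        unfold jdtFun
        rw [dif_pos hex1]
      have hjdt2 : jdtFun n (boxShape lam) (mapEntries (boxShape lam) (rotval n k) T2) =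
          (stepFun n (boxShape lam))^[Nat.find hex2]
            (mapEntries (boxShape lam) (rotval n k) T2) := by
        unfold jdtFun
        rw [dif_pos hex2]
      rw [hjdt1, hjdt2] at heq
      exact run_cancel hk1 hInv1 hInv2 (rot_ideal hk1 hk h11 h12 h13)
        (rot_ideal hk1 hk h21 h22 h23) (Nat.find hex1) (Nat.find hex2)
        (fun j hj => Nat.find_min hex1 hj) (fun j hj => Nat.find_min hex2 hj) heq
    refine ⟨hmaps, hinj, ?_⟩
    have hD : {f | ∃ T : ℕ × ℕ → ℕ, IsFillingF n (boxShape lam) T ∧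
        IsStandardF (boxShape lam) T ∧ deltaOf lam T = n ∧
        f = mapEntries (boxShape lam) (rotval n k) T} =
        (mapEntries (boxShape lam) (rotval n k)) ''
        {M : ℕ × ℕ → ℕ | IsFillingF n (boxShape lam) M ∧ IsStandardF (boxShape lam) M ∧
          M (boxCell lam) = n} := by
      ext f
      constructor
      · rintro ⟨T, h1, h2, h3, rfl⟩
        exact ⟨T, ⟨h1, h2, h3⟩, rfl⟩
      · rintro ⟨T, ⟨h1, h2, h3⟩, rfl⟩
        exact ⟨T, h1, h2, h3, rfl⟩
    have hrotinj : Set.InjOn (mapEntries (boxShape lam) (rotval n k))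
        {M : ℕ × ℕ → ℕ | IsFillingF n (boxShape lam) M ∧ IsStandardF (boxShape lam) M ∧
          M (boxCell lam) = n} := by
      intro f1 h1 f2 h2 heq
      have hc : ∀ e, 1 ≤ e → e ≤ n → rotval n (n - k) (rotval n k e) = e := by
        intro e he1 he2
        have hcc := rotval_comp (n := n) (k := n - k) (e := e) (by omega) he1 he2
        rwa [show n - (n - k) = k by omega] at hcc
      have e1 := mapEntries_cancel h1.1 hc
      have e2 := mapEntries_cancel h2.1 hc
      rw [← e1, ← e2, heq]
    obtain ⟨hTg_eq, hTg_inj⟩ := relabel_sets (lam := lam) hn1 hk1 (le_of_lt hk)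
    have hTg_eq' : {P : ℕ × ℕ → ℕ | IsFillingF n (boxShape lam) P ∧
        IsStandardF (boxShape lam) P ∧ deltaOf lam P = rotval n k n} =
        {P : ℕ × ℕ → ℕ | IsFillingF n (boxShape lam) P ∧
        IsStandardF (boxShape lam) P ∧ P (boxCell lam) = k} := by
      ext P
      simp only [Set.mem_setOf_eq, deltaOf, hkk]
    have hfin : ({P : ℕ × ℕ → ℕ | IsFillingF n (boxShape lam) P ∧
        IsStandardF (boxShape lam) P ∧ deltaOf lam P = rotval n k n}).Finite :=
      Set.Finite.subset fillings_finite (fun P hP => hP.1)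
    have hcard : ({P : ℕ × ℕ → ℕ | IsFillingF n (boxShape lam) P ∧
        IsStandardF (boxShape lam) P ∧ deltaOf lam P = rotval n k n}).ncard =
        ({M : ℕ × ℕ → ℕ | IsFillingF n (boxShape lam) M ∧ IsStandardF (boxShape lam) M ∧
          M (boxCell lam) = n}).ncard := by
      rw [hTg_eq', hTg_eq, Set.ncard_image_of_injOn hTg_inj]
    have himgcard : ((jdtFun n (boxShape lam)) ''
        {f | ∃ T : ℕ × ℕ → ℕ, IsFillingF n (boxShape lam) T ∧
          IsStandardF (boxShape lam) T ∧ deltaOf lam T = n ∧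
          f = mapEntries (boxShape lam) (rotval n k) T}).ncard =
        ({M : ℕ × ℕ → ℕ | IsFillingF n (boxShape lam) M ∧ IsStandardF (boxShape lam) M ∧
          M (boxCell lam) = n}).ncard := by
      rw [Set.ncard_image_of_injOn hinj, hD, Set.ncard_image_of_injOn hrotinj]
    have himg : (jdtFun n (boxShape lam)) ''
        {f | ∃ T : ℕ × ℕ → ℕ, IsFillingF n (boxShape lam) T ∧
          IsStandardF (boxShape lam) T ∧ deltaOf lam T = n ∧
          f = mapEntries (boxShape lam) (rotval n k) T} =
        {P | IsFillingF n (boxShape lam) P ∧ IsStandardF (boxShape lam) P ∧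
          deltaOf lam P = rotval n k n} :=
      Set.eq_of_subset_of_ncard_le (Set.MapsTo.image_subset hmaps)
        (le_of_eq (by rw [hcard, himgcard])) hfin
    exact himg.symm.subset


end SchurRot
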